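/- arXiv:2310.02864 — 3 statements merged into one kernel-verified Lean document; each statement's English description precedes it below -/
import Mathlib

section
/- Let T ≤ d and let X ∈ ℝ^{T×d} be a random matrix such that (i) each row of X has a rotationally invariant distribution over ℝ^d with absolutely continuous marginals and (ii) the rows of X are mutually independent. Then the orthogonal projection P_X onto the row span of X is uniformly distributed over the Grassmannian Gr(T, d). -/
open MeasureTheory ProbabilityTheory Matrix
open scoped Classical

/-- The product measurable structure on matrices. -/
instance matrixMeasurableSpace {m n : Type*} : MeasurableSpace (Matrix m n ℝ) :=
  inferInstanceAs (MeasurableSpace (m → n → ℝ))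

/-- The Moore–Penrose pseudoinverse of a real matrix, characterized by the four
Penrose conditions (which determine it uniquely). -/
noncomputable def pinv {m n : ℕ} (A : Matrix (Fin m) (Fin n) ℝ) : Matrix (Fin n) (Fin m) ℝ :=
  if h : ∃ B : Matrix (Fin n) (Fin m) ℝ,
      A * B * A = A ∧ B * A * B = B ∧ (A * B)ᵀ = A * B ∧ (B * A)ᵀ = B * A
  then h.choose else 0

/-- Spectral (ℓ²-operator) norm of a matrix. -/
noncomputable def opNorm {m n : ℕ} (A : Matrix (Fin m) (Fin n) ℝ) : ℝ :=
  sSup {c : ℝ | ∃ v : Fin n → ℝ, (∑ j, (v j) ^ 2) = 1 ∧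
    c = Real.sqrt (∑ i, (A.mulVec v i) ^ 2)}

/-- Squared Frobenius norm of a matrix. -/
noncomputable def frobSq {m n : ℕ} (A : Matrix (Fin m) (Fin n) ℝ) : ℝ :=
  ∑ i, ∑ j, (A i j) ^ 2

/-- A random vector is sub-Gaussian with variance proxy `σ2`:
`E[exp⟨α,Z⟩] ≤ exp(σ2 ‖α‖² / 2)` for all `α`. -/
def IsSubGaussianVec {Ω : Type*} [MeasurableSpace Ω] (μ : Measure Ω) {k : ℕ}
    (Z : Ω → Fin k → ℝ) (σ2 : ℝ) : Prop :=
  ∀ α : Fin k → ℝ,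
    ∫ ω, Real.exp (∑ i, α i * Z ω i) ∂μ ≤ Real.exp (σ2 * (∑ i, (α i) ^ 2) / 2)

/-- A random vector is centered. -/
def IsCenteredVec {Ω : Type*} [MeasurableSpace Ω] (μ : Measure Ω) {k : ℕ}
    (Z : Ω → Fin k → ℝ) : Prop :=
  ∀ i, ∫ ω, Z ω i ∂μ = 0

/-- A random vector has covariance `σ2 • I` (isotropic). -/
def IsIsotropicVec {Ω : Type*} [MeasurableSpace Ω] (μ : Measure Ω) {k : ℕ}
    (Z : Ω → Fin k → ℝ) (σ2 : ℝ) : Prop :=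
  ∀ i j, ∫ ω, Z ω i * Z ω j ∂μ = if i = j then σ2 else 0

/-- A random vector has a rotationally invariant distribution:
`Q u ≍ u` for every orthogonal `Q`. -/
def RotInvariant {Ω : Type*} [MeasurableSpace Ω] (μ : Measure Ω) {d : ℕ}
    (u : Ω → Fin d → ℝ) : Prop :=
  ∀ Q : Matrix (Fin d) (Fin d) ℝ, Qᵀ * Q = 1 →
    Measure.map (fun ω => Q.mulVec (u ω)) μ = Measure.map u μ

/-- `P` is an orthogonal projection of rank `k` (a point of the Grassmannian `Gr(k,d)`). -/
def IsOrthProj {d : ℕ} (P : Matrix (Fin d) (Fin d) ℝ) (k : ℕ) : Prop :=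
  Pᵀ = P ∧ P * P = P ∧ P.trace = (k : ℝ)

/-- A random matrix is uniformly distributed over the Grassmannian `Gr(k,d)`:
it is a.s. a rank-`k` orthogonal projection and `QᵀPQ ≍ P` for every orthogonal `Q`. -/
def UniformOnGrassmannian {Ω : Type*} [MeasurableSpace Ω] (μ : Measure Ω) {d : ℕ}
    (P : Ω → Matrix (Fin d) (Fin d) ℝ) (k : ℕ) : Prop :=
  (∀ᵐ ω ∂μ, IsOrthProj (P ω) k) ∧
  ∀ Q : Matrix (Fin d) (Fin d) ℝ, Qᵀ * Q = 1 →
    Measure.map (fun ω => Qᵀ * P ω * Q) μ = Measure.map P μ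

/-- Law of a `T × d` matrix with i.i.d. standard normal entries. -/
noncomputable def stdGaussianMatrix (T d : ℕ) : Measure (Matrix (Fin T) (Fin d) ℝ) :=
  Measure.pi fun _ : Fin T => Measure.pi fun _ : Fin d => gaussianReal 0 1

/-! ### Auxiliary material for Statement 1 -/

namespace Stmt1Aux

/-! #### Algebra of the Moore–Penrose pseudoinverse -/

/-- The four Penrose conditions as a predicate. -/
def Penrose {m n : ℕ} (A : Matrix (Fin m) (Fin n) ℝ) (B : Matrix (Fin n) (Fin m) ℝ) : Prop :=
  A * B * A = A ∧ B * A * B = B ∧ (A * B)ᵀ = A * B ∧ (B * A)ᵀ = B * A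

theorem penrose_unique {m n : ℕ} {A : Matrix (Fin m) (Fin n) ℝ}
    {B₁ B₂ : Matrix (Fin n) (Fin m) ℝ}
    (h1 : Penrose A B₁) (h2 : Penrose A B₂) : B₁ = B₂ := by
  obtain ⟨a1, b1, c1, d1⟩ := h1
  obtain ⟨a2, b2, c2, d2⟩ := h2
  have hAT2 : Aᵀ = Aᵀ * A * B₂ := by
    conv_lhs => rw [← a2]
    rw [transpose_mul, c2, Matrix.mul_assoc]
  have hAB : A * B₁ = A * B₂ := by
    have h : A * B₁ = B₁ᵀ * Aᵀ := by rw [← transpose_mul, c1]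
    rw [h, hAT2, ← Matrix.mul_assoc, ← Matrix.mul_assoc, ← transpose_mul, c1, a1]
  have hAT1 : Aᵀ = B₁ * A * Aᵀ := by
    conv_lhs => rw [← a1, Matrix.mul_assoc]
    rw [transpose_mul, d1]
  have hBA : B₁ * A = B₂ * A := by
    have h : B₂ * A = Aᵀ * B₂ᵀ := by rw [← transpose_mul, d2]
    rw [h, hAT1, Matrix.mul_assoc, Matrix.mul_assoc, ← transpose_mul, d2,
      ← Matrix.mul_assoc A B₂ A, a2]
  calc B₁ = B₁ * A * B₁ := b1.symm
    _ = B₁ * (A * B₂) := by rw [Matrix.mul_assoc, hAB]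
    _ = B₂ * A * B₂ := by rw [← Matrix.mul_assoc, hBA]
    _ = B₂ := b2

theorem pinv_eq {m n : ℕ} {A : Matrix (Fin m) (Fin n) ℝ} {B : Matrix (Fin n) (Fin m) ℝ}
    (hB : Penrose A B) : pinv A = B := by
  have hex : ∃ B' : Matrix (Fin n) (Fin m) ℝ,
      A * B' * A = A ∧ B' * A * B' = B' ∧ (A * B')ᵀ = A * B' ∧ (B' * A)ᵀ = B' * A := ⟨B, hB⟩
  rw [pinv, dif_pos hex]
  exact penrose_unique (hex.choose_spec : Penrose A hex.choose) hB

theorem penrose_rightInv {m n : ℕ} {A : Matrix (Fin m) (Fin n) ℝ} (h : (A * Aᵀ).det ≠ 0) :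
    Penrose A (Aᵀ * (A * Aᵀ)⁻¹) := by
  have hu : IsUnit (A * Aᵀ).det := isUnit_iff_ne_zero.mpr h
  have hAB : A * (Aᵀ * (A * Aᵀ)⁻¹) = 1 := by
    rw [← Matrix.mul_assoc, Matrix.mul_nonsing_inv _ hu]
  have hsymT : ((A * Aᵀ)⁻¹)ᵀ = (A * Aᵀ)⁻¹ := by
    rw [Matrix.transpose_nonsing_inv, transpose_mul, transpose_transpose]
  refine ⟨?_, ?_, ?_, ?_⟩
  · rw [hAB, Matrix.one_mul]
  · simp only [Matrix.mul_assoc]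
    rw [hAB, Matrix.mul_one]
  · rw [hAB, transpose_one]
  · rw [Matrix.mul_assoc, transpose_mul, transpose_mul, hsymT, transpose_transpose,
      Matrix.mul_assoc]

theorem pinv_full {m n : ℕ} {A : Matrix (Fin m) (Fin n) ℝ} (h : (A * Aᵀ).det ≠ 0) :
    pinv A = Aᵀ * (A * Aᵀ)⁻¹ := pinv_eq (penrose_rightInv h)

theorem isOrthProj_pinv {m n : ℕ} {A : Matrix (Fin m) (Fin n) ℝ} (h : (A * Aᵀ).det ≠ 0) :
    IsOrthProj (pinv A * A) m := by
  have hu : IsUnit (A * Aᵀ).det := isUnit_iff_ne_zero.mpr h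
  have hAB : A * (Aᵀ * (A * Aᵀ)⁻¹) = 1 := by
    rw [← Matrix.mul_assoc, Matrix.mul_nonsing_inv _ hu]
  have hsymT : ((A * Aᵀ)⁻¹)ᵀ = (A * Aᵀ)⁻¹ := by
    rw [Matrix.transpose_nonsing_inv, transpose_mul, transpose_transpose]
  rw [pinv_full h]
  refine ⟨?_, ?_, ?_⟩
  · rw [Matrix.mul_assoc, transpose_mul, transpose_mul, hsymT, transpose_transpose,
      Matrix.mul_assoc]
  · rw [Matrix.mul_assoc (Aᵀ * (A * Aᵀ)⁻¹) A (Aᵀ * (A * Aᵀ)⁻¹ * A),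
      ← Matrix.mul_assoc A (Aᵀ * (A * Aᵀ)⁻¹) A, hAB, Matrix.one_mul]
  · rw [Matrix.trace_mul_comm, ← Matrix.mul_assoc, Matrix.mul_nonsing_inv _ hu,
      Matrix.trace_one]
    simp

theorem conjF {T d : ℕ} {Q : Matrix (Fin d) (Fin d) ℝ} (hQQT : Q * Qᵀ = 1)
    (A : Matrix (Fin T) (Fin d) ℝ) :
    (A * Q)ᵀ * (A * Q * (A * Q)ᵀ)⁻¹ * (A * Q) = Qᵀ * (Aᵀ * (A * Aᵀ)⁻¹ * A) * Q := by
  have h1 : A * Q * (A * Q)ᵀ = A * Aᵀ := by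
    rw [transpose_mul, Matrix.mul_assoc, ← Matrix.mul_assoc Q Qᵀ Aᵀ, hQQT, Matrix.one_mul]
  rw [h1, transpose_mul]
  simp only [Matrix.mul_assoc]

/-! #### Linear algebra: Gram determinants and linear independence -/

theorem vecMul_gram_zero {k d : ℕ} {B : Matrix (Fin k) (Fin d) ℝ} {c : Fin k → ℝ}
    (h : c ᵥ* (B * Bᵀ) = 0) : c ᵥ* B = 0 := by
  have h2 : B *ᵥ (c ᵥ* B) = 0 := by
    rw [← Matrix.vecMul_transpose, Matrix.vecMul_vecMul, h]
  have h3 : (c ᵥ* B) ⬝ᵥ (c ᵥ* B) = 0 := by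
    rw [← Matrix.dotProduct_mulVec, h2, dotProduct_zero]
  exact (dotProduct_self_eq_zero).mp h3

theorem indep_of_gram_det {k d : ℕ} {A : Matrix (Fin k) (Fin d) ℝ} (h : (A * Aᵀ).det ≠ 0) :
    ∀ c : Fin k → ℝ, c ᵥ* A = 0 → c = 0 := by
  intro c hc
  by_contra hc0
  apply h
  rw [← Matrix.exists_vecMul_eq_zero_iff]
  exact ⟨c, hc0, by rw [← Matrix.vecMul_vecMul, hc, Matrix.zero_vecMul]⟩

theorem exists_perp {k d : ℕ} (hkd : k < d) (A : Matrix (Fin k) (Fin d) ℝ) :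
    ∃ v : Fin d → ℝ, v ≠ 0 ∧ ∀ a : Fin k, A a ⬝ᵥ v = 0 := by
  set Abar : Matrix (Fin d) (Fin d) ℝ :=
    Matrix.of (fun i j => if h : (i : ℕ) < k then A ⟨i, h⟩ j else 0) with hAbar
  have hdet : Abar.det = 0 := by
    apply Matrix.det_eq_zero_of_row_eq_zero ⟨k, hkd⟩
    intro j
    simp [hAbar]
  obtain ⟨v, hv0, hv⟩ := (Matrix.exists_mulVec_eq_zero_iff).mpr hdet
  refine ⟨v, hv0, fun a => ?_⟩
  have := congrFun hv ⟨(a : ℕ), lt_trans a.isLt hkd⟩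
  simpa [hAbar, Matrix.mulVec, a.isLt] using this

theorem dep_perp {k d : ℕ} (hkd : k < d) (A : Matrix (Fin k) (Fin d) ℝ)
    (hA : ∀ c : Fin k → ℝ, c ᵥ* A = 0 → c = 0) :
    ∃ v : Fin d → ℝ, v ≠ 0 ∧ ∀ B : Matrix (Fin (k + 1)) (Fin d) ℝ,
      (∀ (a : Fin k) (j : Fin d), B a.castSucc j = A a j) → (B * Bᵀ).det = 0 →
        v ⬝ᵥ B (Fin.last k) = 0 := by
  obtain ⟨v, hv0, hperp⟩ := exists_perp hkd A
  refine ⟨v, hv0, fun B hBA hdet => ?_⟩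
  obtain ⟨c, hc0, hcB'⟩ := (Matrix.exists_vecMul_eq_zero_iff).mpr hdet
  have hcB : c ᵥ* B = 0 := vecMul_gram_zero hcB'
  have rel : ∀ j : Fin d,
      (∑ a : Fin k, c a.castSucc * A a j) + c (Fin.last k) * B (Fin.last k) j = 0 := by
    intro j
    have h := congrFun hcB j
    simp only [Matrix.vecMul, dotProduct, Pi.zero_apply] at h
    rw [Fin.sum_univ_castSucc] at h
    simpa only [hBA] using h
  by_cases hcl : c (Fin.last k) = 0
  · exfalso
    apply hc0
    have hc' : (fun a : Fin k => c a.castSucc) = 0 := by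
      apply hA
      funext j
      have := rel j
      rw [hcl, zero_mul, add_zero] at this
      simpa [Matrix.vecMul, dotProduct] using this
    funext a
    induction a using Fin.lastCases with
    | last => exact hcl
    | cast a => exact congrFun hc' a
  · have key : c (Fin.last k) * (v ⬝ᵥ B (Fin.last k)) = 0 := by
      have h1 : ∀ j, c (Fin.last k) * B (Fin.last k) j
          = -∑ a : Fin k, c a.castSucc * A a j := by
        intro j
        have := rel j
        linarith
      calc c (Fin.last k) * (v ⬝ᵥ B (Fin.last k))
          = ∑ j, v j * (c (Fin.last k) * B (Fin.last k) j) := by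
            simp only [dotProduct, Finset.mul_sum]
            exact Finset.sum_congr rfl (fun j _ => by ring)
        _ = ∑ j, v j * (-∑ a : Fin k, c a.castSucc * A a j) := by
            simp only [h1]
        _ = -∑ a : Fin k, c a.castSucc * (A a ⬝ᵥ v) := by
            simp only [mul_neg, Finset.sum_neg_distrib, neg_inj]
            simp only [Finset.mul_sum, dotProduct]
            rw [Finset.sum_comm]
            exact Finset.sum_congr rfl fun a _ => Finset.sum_congr rfl fun j _ => by ring
        _ = 0 := by simp [hperp]
    rcases mul_eq_zero.mp key with h | h
    · exact absurd h hcl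
    · exact h

/-! #### Householder reflections -/

theorem householder {d : ℕ} (i0 : Fin d) (v : Fin d → ℝ) (hv : ∑ j, v j ^ 2 = 1) :
    ∃ Q : Matrix (Fin d) (Fin d) ℝ, Qᵀ * Q = 1 ∧ ∀ u : Fin d → ℝ, (Q *ᵥ u) i0 = v ⬝ᵥ u := by
  set e : Fin d → ℝ := Pi.single i0 1 with he
  set w : Fin d → ℝ := v - e with hw
  set c : ℝ := ∑ j, w j ^ 2 with hc
  have hsingle : ∀ u : Fin d → ℝ, e ⬝ᵥ u = u i0 := by
    intro u
    simp [he, dotProduct, Pi.single_apply, Finset.sum_ite_eq]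
  by_cases hc0 : c = 0
  · have hwz : ∀ j, w j = 0 := by
      have hsum : ∑ j, w j ^ 2 = 0 := by rw [← hc]; exact hc0
      intro j
      exact sq_eq_zero_iff.mp
        ((Finset.sum_eq_zero_iff_of_nonneg (fun i _ => sq_nonneg (w i))).mp hsum j
          (Finset.mem_univ j))
    have hve : v = e := by
      funext j
      have := hwz j
      simp only [hw, Pi.sub_apply] at this
      linarith
    refine ⟨1, by simp, fun u => ?_⟩
    rw [Matrix.one_mulVec, hve, hsingle]
  · set M : Matrix (Fin d) (Fin d) ℝ := Matrix.vecMulVec w w with hM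
    set a : ℝ := 2 / c with ha
    set Q : Matrix (Fin d) (Fin d) ℝ := 1 - a • M with hQ
    have hMM : M * M = c • M := by
      ext i j
      simp only [hM, Matrix.mul_apply, Matrix.vecMulVec_apply, Matrix.smul_apply, smul_eq_mul]
      calc ∑ x, w i * w x * (w x * w j) = ∑ x, w x ^ 2 * (w i * w j) := by
            exact Finset.sum_congr rfl fun x _ => by ring
        _ = c * (w i * w j) := by rw [← Finset.sum_mul, hc]
    have hQT : Qᵀ = Q := by
      rw [hQ, Matrix.transpose_sub, Matrix.transpose_one, Matrix.transpose_smul]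
      congr 1
      ext i j
      simp [hM, Matrix.vecMulVec_apply, mul_comm]
    have hQQ : Q * Q = 1 := by
      have expand : Q * Q = 1 - a • M - a • M + (a * a) • (M * M) := by
        simp only [hQ, sub_mul, mul_sub, Matrix.one_mul, Matrix.mul_one,
          Matrix.smul_mul, Matrix.mul_smul, smul_smul]
        abel
      rw [expand, hMM, smul_smul]
      have hcoef : a * a * c = a + a := by
        rw [ha]; field_simp; ring
      rw [hcoef, add_smul]
      abel
    have hwi0 : w i0 = v i0 - 1 := by simp [hw, he]
    have hc2 : c = 2 - 2 * v i0 := by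
      have : ∀ j, w j ^ 2 = v j ^ 2 - 2 * (v j * e j) + e j ^ 2 := by
        intro j; simp only [hw, Pi.sub_apply]; ring
      rw [hc, Finset.sum_congr rfl fun j _ => this j]
      rw [Finset.sum_add_distrib, Finset.sum_sub_distrib, hv]
      have h1 : ∑ x, v x * e x = v i0 := by
        simp [he, Pi.single_apply, mul_ite, Finset.sum_ite_eq']
      have h2 : ∑ x : Fin d, e x ^ 2 = 1 := by
        simp [he, Pi.single_apply, ite_pow, Finset.sum_ite_eq']
      rw [← Finset.mul_sum, h1, h2]
      ring
    refine ⟨Q, by rw [hQT, hQQ], fun u => ?_⟩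
    have hrow : (Q *ᵥ u) i0 = u i0 - a * (w i0 * (w ⬝ᵥ u)) := by
      rw [hQ, Matrix.sub_mulVec, Matrix.one_mulVec]
      simp only [Pi.sub_apply, Matrix.smul_mulVec, Pi.smul_apply, smul_eq_mul]
      congr 2
      simp only [hM, Matrix.mulVec, Matrix.vecMulVec_apply, dotProduct, Finset.mul_sum]
      exact Finset.sum_congr rfl fun x _ => by ring
    have hwu : w ⬝ᵥ u = v ⬝ᵥ u - u i0 := by
      rw [hw, sub_dotProduct, hsingle]
    rw [hrow, hwu, hwi0, ha]
    have hne : c ≠ 0 := hc0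
    rw [hc2] at hne ⊢
    have hne' : 1 - v i0 ≠ 0 := by intro h; apply hne; linarith
    field_simp
    ring

/-! #### Measurability helpers -/

theorem measurable_det_comp {X : Type*} [MeasurableSpace X] {n : ℕ}
    {f : X → Matrix (Fin n) (Fin n) ℝ} (hf : ∀ i j, Measurable fun x => f x i j) :
    Measurable fun x => (f x).det := by
  simp_rw [Matrix.det_apply, Units.smul_def, zsmul_eq_mul]
  exact Finset.measurable_sum _ fun σ _ =>
    (measurable_const.mul (Finset.measurable_prod _ fun i _ => hf _ _))

theorem measurable_mulVec {d : ℕ} (Q : Matrix (Fin d) (Fin d) ℝ) :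
    Measurable fun u : Fin d → ℝ => Q *ᵥ u := by
  have heq : (fun u : Fin d → ℝ => Q *ᵥ u) = fun u i => ∑ j, Q i j * u j := by
    funext u i
    simp [Matrix.mulVec, dotProduct]
  rw [heq]
  exact measurable_pi_lambda _ fun i =>
    Finset.measurable_sum _ fun j _ => (measurable_pi_apply j).const_mul _

theorem measurable_dotProduct {d : ℕ} (v : Fin d → ℝ) :
    Measurable fun u : Fin d → ℝ => v ⬝ᵥ u :=
  Finset.measurable_sum _ fun j _ => (measurable_pi_apply j).const_mul _

theorem measurable_matrix_of {X : Type*} [MeasurableSpace X] {a b : ℕ}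
    {f : X → Matrix (Fin a) (Fin b) ℝ} (h : ∀ i j, Measurable fun x => f x i j) :
    Measurable f :=
  measurable_pi_lambda _ fun i => measurable_pi_lambda _ fun j => h i j

theorem measurable_matrix_entry {a b : ℕ} (i : Fin a) (j : Fin b) :
    Measurable fun M : Matrix (Fin a) (Fin b) ℝ => M i j :=
  (measurable_pi_apply j).comp (measurable_pi_apply i)

/-- Slicing lemma: if every slice of `S` in direction `k` is null, then `S` is null for the
product measure. -/
theorem pi_null_of_slice {T d : ℕ} (ν : Fin T → Measure (Fin d → ℝ))
    [∀ i, IsProbabilityMeasure (ν i)] (k : Fin T) {S : Set (Fin T → Fin d → ℝ)}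
    (hS : MeasurableSet S)
    (h : ∀ y : Fin T → Fin d → ℝ, ν k {u | Function.update y k u ∈ S} = 0) :
    Measure.pi ν S = 0 := by
  classical
  set p : Fin T → Prop := fun i => i ≠ k with hp
  letI : Unique {i : Fin T // ¬ p i} :=
    ⟨⟨⟨k, not_not_intro rfl⟩⟩, fun a => Subtype.ext (not_not.mp a.2)⟩
  set e := MeasurableEquiv.piEquivPiSubtypeProd (fun _ : Fin T => Fin d → ℝ) p with hee
  have hmp := MeasureTheory.measurePreserving_piEquivPiSubtypeProd ν p
  have hS' : MeasurableSet (e.symm ⁻¹' S) := e.symm.measurable hS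
  have h0 : Measure.pi ν S = ((Measure.pi fun i : Subtype p => ν i).prod
      (Measure.pi fun i : {i // ¬ p i} => ν i)) (e.symm ⁻¹' S) := by
    rw [← hmp.map_eq, MeasurableEquiv.map_apply]
    congr 1
    ext M
    simp only [Set.mem_preimage]
    rw [← hee, e.symm_apply_apply]
  rw [h0, Measure.measure_prod_null hS']
  refine Filter.Eventually.of_forall (fun x => ?_)
  set pe := MeasurableEquiv.piUnique (fun _ : {i : Fin T // ¬ p i} => Fin d → ℝ) with hpe
  have hpu := MeasureTheory.measurePreserving_piUnique (fun i : {i : Fin T // ¬ p i} => ν i)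
  set y : Fin T → Fin d → ℝ := fun i => if h : p i then x ⟨i, h⟩ else 0 with hy
  have key : ∀ us : {i : Fin T // ¬ p i} → (Fin d → ℝ),
      e.symm (x, us) = Function.update y k (us default) := by
    intro us
    funext i
    by_cases hi : p i
    · rw [Function.update_of_ne hi]
      simp only [hee, MeasurableEquiv.piEquivPiSubtypeProd, Equiv.piEquivPiSubtypeProd, hy,
        MeasurableEquiv.symm_mk, MeasurableEquiv.coe_mk, Equiv.coe_fn_symm_mk]
      rw [dif_pos hi, dif_pos hi]
    · have hik : i = k := not_not.mp hi
      subst hik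
      rw [Function.update_self]
      simp only [hee, MeasurableEquiv.piEquivPiSubtypeProd, Equiv.piEquivPiSubtypeProd,
        MeasurableEquiv.symm_mk, MeasurableEquiv.coe_mk, Equiv.coe_fn_symm_mk]
      rw [dif_neg hi]
      exact congrArg us (Subsingleton.elim _ _)
  have hset : Prod.mk x ⁻¹' (e.symm ⁻¹' S) = pe ⁻¹' {u | Function.update y k u ∈ S} := by
    ext us
    simp only [Set.mem_preimage, Set.mem_setOf_eq, key us]
    exact Iff.rfl
  have ht : MeasurableSet {u : Fin d → ℝ | Function.update y k u ∈ S} :=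
    (measurable_update y) hS
  simp only [Pi.zero_apply]
  rw [hset, ← Measure.map_apply pe.measurable ht, hpu.map_eq]
  have hdef : ((default : {i // ¬ p i}) : Fin T) = k := rfl
  rw [hdef]
  exact h y

/-! #### Gram determinants of leading rows -/

def rowsub {T d : ℕ} (k : ℕ) (hk : k ≤ T) (M : Fin T → Fin d → ℝ) :
    Matrix (Fin k) (Fin d) ℝ :=
  Matrix.of fun a j => M (Fin.castLE hk a) j

noncomputable def gramDet {T d : ℕ} (k : ℕ) (hk : k ≤ T) (M : Fin T → Fin d → ℝ) : ℝ :=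
  (rowsub k hk M * (rowsub k hk M)ᵀ).det

theorem measurable_gramDet {T d : ℕ} (k : ℕ) (hk : k ≤ T) :
    Measurable fun M : Fin T → Fin d → ℝ => gramDet k hk M := by
  apply measurable_det_comp
  intro a b
  have heq : (fun M : Fin T → Fin d → ℝ => (rowsub k hk M * (rowsub k hk M)ᵀ) a b)
      = fun M => ∑ j, M (Fin.castLE hk a) j * M (Fin.castLE hk b) j := by
    funext M
    simp [Matrix.mul_apply, rowsub]
  rw [heq]
  exact Finset.measurable_sum _ fun j _ =>
    by fun_prop

theorem gram_null {T d : ℕ} (hTd : T ≤ d) (ν : Fin T → Measure (Fin d → ℝ))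
    [∀ i, IsProbabilityMeasure (ν i)]
    (hplane : ∀ (i : Fin T) (v : Fin d → ℝ), v ≠ 0 → ν i {u | v ⬝ᵥ u = 0} = 0) :
    ∀ (k : ℕ) (hk : k ≤ T), Measure.pi ν {M | gramDet k hk M = 0} = 0 := by
  intro k
  induction k with
  | zero =>
    intro hk
    have : {M : Fin T → Fin d → ℝ | gramDet 0 hk M = 0} = ∅ := by
      ext M
      simp [gramDet, Matrix.det_fin_zero]
    rw [this, measure_empty]
  | succ k ih =>
    intro hk1
    have hkT : k < T := Nat.lt_of_succ_le hk1
    have hk : k ≤ T := le_of_lt hkT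
    have hkd : k < d := lt_of_lt_of_le hkT hTd
    set kk : Fin T := ⟨k, hkT⟩ with hkk
    set S : Set (Fin T → Fin d → ℝ) :=
      {M | gramDet (k+1) hk1 M = 0 ∧ gramDet k hk M ≠ 0} with hSdef
    have hSmeas : MeasurableSet S := by
      have h1 := (measurable_gramDet (T := T) (d := d) (k+1) hk1)
        (MeasurableSet.singleton (0:ℝ))
      have h2 := (measurable_gramDet (T := T) (d := d) k hk) (MeasurableSet.singleton (0:ℝ))
      exact h1.inter h2.compl
    have hfix : ∀ (y : Fin T → Fin d → ℝ) (u : Fin d → ℝ),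
        rowsub k hk (Function.update y kk u) = rowsub k hk y := by
      intro y u
      ext a j
      have hne : Fin.castLE hk a ≠ kk := by
        intro hcontra
        have : (a : ℕ) = k := congrArg Fin.val hcontra
        exact absurd this (Nat.ne_of_lt a.isLt)
      simp [rowsub, Function.update_of_ne hne]
    have hS0 : Measure.pi ν S = 0 := by
      apply pi_null_of_slice ν kk hSmeas
      intro y
      by_cases hy : gramDet k hk y = 0
      · have : {u : Fin d → ℝ | Function.update y kk u ∈ S} = ∅ := by
          ext u
          simp only [Set.mem_setOf_eq, hSdef, Set.mem_empty_iff_false, iff_false]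
          intro hmem
          apply hmem.2
          show gramDet k hk (Function.update y kk u) = 0
          unfold gramDet
          rw [hfix y u]
          exact hy
        rw [this, measure_empty]
      · have hA := indep_of_gram_det
          (show ((rowsub k hk y) * (rowsub k hk y)ᵀ).det ≠ 0 from hy)
        obtain ⟨v, hv0, hv⟩ := dep_perp hkd (rowsub k hk y) hA
        apply measure_mono_null _ (hplane kk v hv0)
        intro u hu
        have hB1 : ∀ (a : Fin k) (j : Fin d),
            rowsub (k+1) hk1 (Function.update y kk u) a.castSucc j = rowsub k hk y a j := by
          intro a j
          have hne : Fin.castLE hk1 a.castSucc ≠ kk := by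
            intro hcontra
            have : (a : ℕ) = k := congrArg Fin.val hcontra
            exact absurd this (Nat.ne_of_lt a.isLt)
          show Function.update y kk u (Fin.castLE hk1 a.castSucc) j = y (Fin.castLE hk a) j
          rw [Function.update_of_ne hne]
          congr 1
        have hB2 : rowsub (k+1) hk1 (Function.update y kk u) (Fin.last k) = u := by
          have hlast : Fin.castLE hk1 (Fin.last k) = kk := rfl
          funext j
          simp [rowsub, hlast]
        have hdet : ((rowsub (k+1) hk1 (Function.update y kk u))
            * (rowsub (k+1) hk1 (Function.update y kk u))ᵀ).det = 0 := hu.1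
        have := hv _ hB1 hdet
        rw [hB2] at this
        exact this
    have hsub : {M : Fin T → Fin d → ℝ | gramDet (k+1) hk1 M = 0}
        ⊆ {M | gramDet k hk M = 0} ∪ S := by
      intro M hM
      by_cases h : gramDet k hk M = 0
      · exact Or.inl h
      · exact Or.inr ⟨hM, h⟩
    refine le_antisymm ?_ (by simp)
    calc Measure.pi ν {M | gramDet (k+1) hk1 M = 0}
        ≤ Measure.pi ν ({M | gramDet k hk M = 0} ∪ S) := measure_mono hsub
      _ ≤ Measure.pi ν {M | gramDet k hk M = 0} + Measure.pi ν S := measure_union_le _ _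
      _ = 0 := by rw [ih hk, hS0, add_zero]

theorem gramDet_top {T d : ℕ} (M : Matrix (Fin T) (Fin d) ℝ) :
    gramDet T le_rfl M = (M * Mᵀ).det := by
  have : rowsub T le_rfl M = M := by
    ext a j
    show M (Fin.castLE le_rfl a) j = M a j
    congr 1
  unfold gramDet
  rw [this]

end Stmt1Aux

open Stmt1Aux in
/-- If `T ≤ d` and the rows of the random matrix `X ∈ ℝ^{T×d}` are mutually
independent, each with a rotationally invariant distribution with absolutely continuous
marginals, then the orthogonal projection `P_X = X⁺X` onto the row span of `X` is uniformly
distributed over the Grassmannian `Gr(T, d)`. -/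
theorem stmt_1 {Ω : Type} [MeasurableSpace Ω] (μ : Measure Ω) [IsProbabilityMeasure μ]
    (T d : ℕ) (hTd : T ≤ d)
    (X : Ω → Matrix (Fin T) (Fin d) ℝ) (hXm : Measurable X)
    (hrot : ∀ i : Fin T, RotInvariant μ (fun ω => X ω i))
    (hac : ∀ (i : Fin T) (j : Fin d),
      Measure.map (fun ω => X ω i j) μ ≪ (volume : Measure ℝ))
    (hindep : iIndepFun (fun i ω => X ω i) μ) :
    UniformOnGrassmannian μ (fun ω => pinv (X ω) * X ω) T := by
  classical
  have hXi : ∀ i : Fin T, Measurable fun ω => X ω i :=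
    fun i => (measurable_pi_apply i).comp hXm
  have hXij : ∀ (i : Fin T) (j : Fin d), Measurable fun ω => X ω i j :=
    fun i j => (measurable_pi_apply j).comp (hXi i)
  set ν : Fin T → Measure (Fin d → ℝ) := fun i => Measure.map (fun ω => X ω i) μ with hν
  haveI : ∀ i, IsProbabilityMeasure (ν i) :=
    fun i => Measure.isProbabilityMeasure_map (hXi i).aemeasurable
  -- joint law is the product of the marginals
  have hjoint : Measure.map X μ = Measure.pi ν := by
    refine (Measure.pi_eq fun s hs => ?_).symm
    refine Eq.trans (Measure.map_apply hXm (MeasurableSet.univ_pi hs)) ?_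
    have hpre : X ⁻¹' Set.pi Set.univ s = ⋂ i ∈ Finset.univ, (fun ω => X ω i) ⁻¹' s i := by
      ext ω
      simp only [Set.mem_preimage, Set.mem_iInter, Finset.mem_univ, forall_const]
      exact Set.mem_univ_pi
    rw [hpre, hindep.measure_inter_preimage_eq_mul Finset.univ (fun i _ => hs i)]
    exact Finset.prod_congr rfl fun i _ => (Measure.map_apply (hXi i) (hs i)).symm
  -- every hyperplane through the origin is null for each marginal
  have hplane : ∀ (i : Fin T) (v : Fin d → ℝ), v ≠ 0 → ν i {u | v ⬝ᵥ u = 0} = 0 := by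
    intro i v hv0
    have hex : ∃ j, v j ≠ 0 := by
      by_contra hcon
      push_neg at hcon
      exact hv0 (funext hcon)
    obtain ⟨i0, hi0⟩ := hex
    set c : ℝ := ∑ j, v j ^ 2 with hc
    have hcpos : 0 < c :=
      Finset.sum_pos' (fun j _ => sq_nonneg _) ⟨i0, Finset.mem_univ _, by positivity⟩
    set s : ℝ := Real.sqrt c with hs
    have hsne : s ≠ 0 := Real.sqrt_ne_zero'.mpr hcpos
    set vhat : Fin d → ℝ := s⁻¹ • v with hvhat
    have hnorm : ∑ j, vhat j ^ 2 = 1 := by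
      have : ∀ j, vhat j ^ 2 = s⁻¹ ^ 2 * v j ^ 2 := by
        intro j; simp [hvhat, mul_pow]
      rw [Finset.sum_congr rfl fun j _ => this j, ← Finset.mul_sum, ← hc, inv_pow,
        Real.sq_sqrt hcpos.le]
      exact inv_mul_cancel₀ (ne_of_gt hcpos)
    obtain ⟨Q, hQorth, hQrow⟩ := householder i0 vhat hnorm
    have hmap := hrot i Q hQorth
    have hmeasQX : Measurable fun ω => Q *ᵥ X ω i := (measurable_mulVec Q).comp (hXi i)
    have hSm : MeasurableSet {u : Fin d → ℝ | u i0 = 0} :=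
      (measurable_pi_apply i0) (measurableSet_singleton 0)
    have h1 : Measure.map (fun ω => Q *ᵥ X ω i) μ {u | u i0 = 0}
        = μ {ω | vhat ⬝ᵥ X ω i = 0} := by
      rw [Measure.map_apply hmeasQX hSm]
      congr 1
      ext ω
      simp [hQrow]
    have h2 : Measure.map (fun ω => X ω i) μ {u | u i0 = 0} = μ {ω | X ω i i0 = 0} := by
      rw [Measure.map_apply (hXi i) hSm]
      rfl
    have h3 : μ {ω | X ω i i0 = 0} = 0 := by
      have h0 := hac i i0 (show (volume : Measure ℝ) {(0:ℝ)} = 0 from Real.volume_singleton)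
      rw [Measure.map_apply (hXij i i0) (measurableSet_singleton 0)] at h0
      exact h0
    have hvv : μ {ω | vhat ⬝ᵥ X ω i = 0} = 0 := by
      rw [h1.symm, hmap, h2, h3]
    have hmeasset : MeasurableSet {u : Fin d → ℝ | v ⬝ᵥ u = 0} :=
      (measurable_dotProduct v) (measurableSet_singleton 0)
    rw [hν]
    show Measure.map (fun ω => X ω i) μ {u | v ⬝ᵥ u = 0} = 0
    rw [Measure.map_apply (hXi i) hmeasset]
    have hsets : (fun ω => X ω i) ⁻¹' {u | v ⬝ᵥ u = 0} = {ω | vhat ⬝ᵥ X ω i = 0} := by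
      ext ω
      simp only [Set.mem_preimage, Set.mem_setOf_eq, hvhat, smul_dotProduct,
        smul_eq_mul]
      constructor
      · intro h; rw [h, mul_zero]
      · intro h
        rcases mul_eq_zero.mp h with h' | h'
        · exact absurd h' (inv_ne_zero hsne)
        · exact h'
    rw [hsets, hvv]
  -- a.s. the Gram matrix is nonsingular
  have hdet_ae : ∀ᵐ ω ∂μ, (X ω * (X ω)ᵀ).det ≠ 0 := by
    have hDmeas : MeasurableSet {M : Fin T → Fin d → ℝ | gramDet T le_rfl M = 0} :=
      (measurable_gramDet (T := T) (d := d) T le_rfl) (MeasurableSet.singleton (0:ℝ))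
    rw [ae_iff]
    have hseteq : {ω | ¬ (X ω * (X ω)ᵀ).det ≠ 0}
        = X ⁻¹' {M : Fin T → Fin d → ℝ | gramDet T le_rfl M = 0} := by
      ext ω
      simp only [Set.mem_setOf_eq, not_not, Set.mem_preimage, gramDet_top]
      exact Iff.rfl
    rw [hseteq]; erw [← Measure.map_apply hXm hDmeas, hjoint]
    exact gram_null hTd ν hplane T le_rfl
  constructor
  · exact hdet_ae.mono fun ω h => isOrthProj_pinv h
  · intro Q hQ
    have hQQT : Q * Qᵀ = 1 := mul_eq_one_comm.mp hQ
    set F : Matrix (Fin T) (Fin d) ℝ → Matrix (Fin d) (Fin d) ℝ :=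
      fun A => Aᵀ * (A * Aᵀ)⁻¹ * A with hF
    -- measurability of F
    have hGentry : ∀ (i j : Fin T),
        Measurable fun A : Matrix (Fin T) (Fin d) ℝ => (A * Aᵀ) i j := by
      intro i j
      have heq : (fun A : Matrix (Fin T) (Fin d) ℝ => (A * Aᵀ) i j)
          = fun A => ∑ b, A i b * A j b := by
        funext A
        simp [Matrix.mul_apply]
      rw [heq]
      exact Finset.measurable_sum _ fun b _ =>
        (measurable_matrix_entry i b).mul (measurable_matrix_entry j b)
    have hdetmeas : Measurable fun A : Matrix (Fin T) (Fin d) ℝ => (A * Aᵀ).det :=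
      measurable_det_comp hGentry
    have hadj : ∀ (i j : Fin T),
        Measurable fun A : Matrix (Fin T) (Fin d) ℝ => (A * Aᵀ).adjugate i j := by
      intro i j
      have heq : (fun A : Matrix (Fin T) (Fin d) ℝ => (A * Aᵀ).adjugate i j)
          = fun A => ((A * Aᵀ).updateRow j (Pi.single i 1)).det := by
        funext A
        rw [Matrix.adjugate_apply]
      rw [heq]
      apply measurable_det_comp
      intro a b
      by_cases hab : a = j
      · subst hab
        simp only [Matrix.updateRow_self]
        exact measurable_const
      · simp only [Matrix.updateRow_ne hab]
        exact hGentry a b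
    have hinv : ∀ (i j : Fin T),
        Measurable fun A : Matrix (Fin T) (Fin d) ℝ => (A * Aᵀ)⁻¹ i j := by
      intro i j
      have heq : (fun A : Matrix (Fin T) (Fin d) ℝ => (A * Aᵀ)⁻¹ i j)
          = fun A => (Ring.inverse (A * Aᵀ).det) * (A * Aᵀ).adjugate i j := by
        funext A
        rw [Matrix.inv_def, Matrix.smul_apply, smul_eq_mul]
      rw [heq]
      simp only [Ring.inverse_eq_inv']
      exact (measurable_inv.comp hdetmeas).mul (hadj i j)
    have hFmeas : Measurable F := by
      apply measurable_matrix_of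
      intro i j
      have heq : (fun A : Matrix (Fin T) (Fin d) ℝ => F A i j)
          = fun A => ∑ b : Fin T, (∑ a : Fin T, A a i * (A * Aᵀ)⁻¹ a b) * A b j := by
        funext A
        simp [hF, Matrix.mul_apply, Matrix.transpose_apply]
      rw [heq]
      exact Finset.measurable_sum _ fun b _ =>
        (Finset.measurable_sum _ fun a _ =>
          (measurable_matrix_entry a i).mul (hinv a b)).mul (measurable_matrix_entry b j)
    have hmulQmeas : Measurable fun A : Matrix (Fin T) (Fin d) ℝ => A * Q := by
      apply measurable_matrix_of
      intro i j
      have heq : (fun A : Matrix (Fin T) (Fin d) ℝ => (A * Q) i j)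
          = fun A => ∑ b, A i b * Q b j := by
        funext A
        simp [Matrix.mul_apply]
      rw [heq]
      exact Finset.measurable_sum _ fun b _ => (measurable_matrix_entry i b).mul_const _
    have hconjmeas : Measurable fun B : Matrix (Fin d) (Fin d) ℝ => Qᵀ * B * Q := by
      apply measurable_matrix_of
      intro i j
      have heq : (fun B : Matrix (Fin d) (Fin d) ℝ => (Qᵀ * B * Q) i j)
          = fun B => ∑ b : Fin d, (∑ a : Fin d, Q a i * B a b) * Q b j := by
        funext B
        simp [Matrix.mul_apply, Matrix.transpose_apply]
      rw [heq]
      exact Finset.measurable_sum _ fun b _ =>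
        (Finset.measurable_sum _ fun a _ =>
          (measurable_matrix_entry a b).const_mul _).mul_const _
    -- almost-everywhere identification of the projection with F ∘ X
    have hPF : (fun ω => pinv (X ω) * X ω) =ᵐ[μ] (F ∘ X) :=
      hdet_ae.mono fun ω h => by
        show pinv (X ω) * X ω = F (X ω)
        rw [hF, pinv_full h]
    have hCF : (fun ω => Qᵀ * (pinv (X ω) * X ω) * Q) =ᵐ[μ] ((fun A => Qᵀ * F A * Q) ∘ X) :=
      hdet_ae.mono fun ω h => by
        show Qᵀ * (pinv (X ω) * X ω) * Q = Qᵀ * F (X ω) * Q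
        rw [hF, pinv_full h]
    -- invariance of the joint law under right multiplication by Q
    have hINV : Measure.map (fun A : Matrix (Fin T) (Fin d) ℝ => A * Q) (Measure.pi ν)
        = Measure.pi ν := by
      have hmulQ : (fun A : Matrix (Fin T) (Fin d) ℝ => A * Q)
          = fun (M : Fin T → Fin d → ℝ) (i : Fin T) => Qᵀ *ᵥ M i := by
        funext M i j
        simp [Matrix.mul_apply, Matrix.mulVec, dotProduct, Matrix.transpose_apply,
          mul_comm]
      have hpres : MeasurePreserving (fun (M : Fin T → Fin d → ℝ) (i : Fin T) => Qᵀ *ᵥ M i)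
          (Measure.pi ν) (Measure.pi ν) := by
        apply MeasureTheory.measurePreserving_pi
        intro i
        refine ⟨measurable_mulVec Qᵀ, ?_⟩
        have hcomp : Measure.map (fun u => Qᵀ *ᵥ u) (ν i)
            = Measure.map (fun ω => Qᵀ *ᵥ X ω i) μ := by
          rw [hν]
          rw [Measure.map_map (measurable_mulVec Qᵀ) (hXi i)]
          rfl
        rw [hcomp]
        have hQT : (Qᵀ)ᵀ * Qᵀ = 1 := by rw [transpose_transpose, hQQT]
        exact hrot i Qᵀ hQT
      exact hmulQ ▸ hpres.map_eq
    -- the chain of equalities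
    show Measure.map (fun ω => Qᵀ * (pinv (X ω) * X ω) * Q) μ
        = Measure.map (fun ω => pinv (X ω) * X ω) μ
    calc Measure.map (fun ω => Qᵀ * (pinv (X ω) * X ω) * Q) μ
        = Measure.map ((fun A => Qᵀ * F A * Q) ∘ X) μ := Measure.map_congr hCF
      _ = Measure.map (fun A => Qᵀ * F A * Q) (Measure.map X μ) :=
          (Measure.map_map (hconjmeas.comp hFmeas) hXm).symm
      _ = Measure.map (fun A => F (A * Q)) (Measure.map X μ) := by
          congr 1
          funext A
          rw [hF]
          exact (conjF hQQT A).symm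
      _ = Measure.map F (Measure.map (fun A => A * Q) (Measure.map X μ)) :=
          (Measure.map_map hFmeas hmulQmeas).symm
      _ = Measure.map F (Measure.map X μ) := by rw [hjoint]; erw [hINV]
      _ = Measure.map (F ∘ X) μ := Measure.map_map hFmeas hXm
      _ = Measure.map (fun ω => pinv (X ω) * X ω) μ := (Measure.map_congr hPF).symm
end

section
/- Let d ≥ 2, T ≤ d, and let P be a random matrix uniformly distributed over the Grassmannian Gr(T, d) (identified with rank-T orthogonal projections in ℝ^{d×d}). Then for every fixed rank-r orthogonal projection P₀ ∈ Gr(r, d), E[P P₀ P] = [ (T²d + T(d−2)) / ((d−1)d(d+2)) ] · P₀ + [ rT(d−T) / ((d−1)d(d+2)) ] · I_d. Moreover, if d = 1 then E[P P₀ P] = T·P₀. -/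
open MeasureTheory ProbabilityTheory Matrix
open scoped Classical

section Aux

variable {Ω : Type} [MeasurableSpace Ω] {μ : Measure Ω} {d T : ℕ}
  {P : Ω → Matrix (Fin d) (Fin d) ℝ}

/-- second moment function -/
noncomputable def Fm (μ : Measure Ω) (P : Ω → Matrix (Fin d) (Fin d) ℝ)
    (i j k l : Fin d) : ℝ := ∫ ω, P ω i j * P ω k l ∂μ

lemma meas_entry (hPm : Measurable P) (i j : Fin d) : Measurable fun ω => P ω i j :=
  (measurable_pi_apply j).comp ((measurable_pi_apply i).comp hPm)

lemma ae_bound (hP1 : ∀ᵐ ω ∂μ, IsOrthProj (P ω) T) :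
    ∀ᵐ ω ∂μ, ∀ i j, |P ω i j| ≤ 1 := by
  filter_upwards [hP1] with ω h
  obtain ⟨hsym, hidem, -⟩ := h
  have hs : ∀ a b, P ω a b = P ω b a := by
    intro a b; conv_lhs => rw [← hsym, Matrix.transpose_apply]
  have hdiag : ∀ i, P ω i i = ∑ x, (P ω i x) ^ 2 := by
    intro i
    conv_lhs => rw [← hidem]
    rw [Matrix.mul_apply]
    exact Finset.sum_congr rfl fun x _ => by rw [hs x i]; ring
  have key : ∀ i j, (P ω i j) ^ 2 ≤ P ω i i := by
    intro i j
    rw [hdiag i]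
    exact Finset.single_le_sum (f := fun x => (P ω i x) ^ 2)
      (fun x _ => sq_nonneg _) (Finset.mem_univ j)
  have hnn : ∀ i, 0 ≤ P ω i i := by
    intro i; rw [hdiag i]
    exact Finset.sum_nonneg fun x _ => sq_nonneg _
  have hle1 : ∀ i, P ω i i ≤ 1 := by
    intro i
    have := key i i
    nlinarith [hnn i]
  intro i j
  have h1 : (P ω i j) ^ 2 ≤ 1 := (key i j).trans (hle1 i)
  nlinarith [sq_abs (P ω i j), abs_nonneg (P ω i j)]

lemma integ_prod [IsProbabilityMeasure μ] (hPm : Measurable P)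
    (hP1 : ∀ᵐ ω ∂μ, IsOrthProj (P ω) T) (i j k l : Fin d) :
    Integrable (fun ω => P ω i j * P ω k l) μ := by
  refine (integrable_const (1 : ℝ)).mono'
    ((meas_entry hPm i j).mul (meas_entry hPm k l)).aestronglyMeasurable ?_
  filter_upwards [ae_bound hP1] with ω h
  rw [Real.norm_eq_abs, abs_mul]
  calc |P ω i j| * |P ω k l| ≤ 1 * 1 :=
        mul_le_mul (h i j) (h k l) (abs_nonneg _) zero_le_one
    _ = 1 := by ring

lemma F_Q (hPm : Measurable P) (hP : UniformOnGrassmannian μ P T)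
    (Q : Matrix (Fin d) (Fin d) ℝ) (hQ : Qᵀ * Q = 1) (i j k l : Fin d) :
    ∫ ω, (Qᵀ * P ω * Q) i j * (Qᵀ * P ω * Q) k l ∂μ = Fm μ P i j k l := by
  have hmeasQP : Measurable fun ω => Qᵀ * P ω * Q := by
    apply measurable_pi_lambda; intro a
    apply measurable_pi_lambda; intro b
    simp only [Matrix.mul_apply, Matrix.transpose_apply]
    exact Finset.measurable_sum _ fun x _ =>
      (Finset.measurable_sum _ fun y _ =>
        (measurable_const.mul (meas_entry hPm y x))).mul measurable_const
  have hg : Measurable fun M : Matrix (Fin d) (Fin d) ℝ => M i j * M k l :=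
    Measurable.mul (f := fun M : Matrix (Fin d) (Fin d) ℝ => M i j)
      (g := fun M : Matrix (Fin d) (Fin d) ℝ => M k l)
      ((measurable_pi_apply j).comp (measurable_pi_apply i))
      ((measurable_pi_apply l).comp (measurable_pi_apply k))
  calc ∫ ω, (Qᵀ * P ω * Q) i j * (Qᵀ * P ω * Q) k l ∂μ
      = ∫ M, M i j * M k l ∂(Measure.map (fun ω => Qᵀ * P ω * Q) μ) :=
        (integral_map hmeasQP.aemeasurable hg.aestronglyMeasurable).symm
    _ = ∫ M, M i j * M k l ∂(Measure.map P μ) := by rw [hP.2 Q hQ]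
    _ = ∫ ω, P ω i j * P ω k l ∂μ :=
        integral_map hPm.aemeasurable hg.aestronglyMeasurable

lemma F_inv [IsProbabilityMeasure μ] (hPm : Measurable P)
    (hP : UniformOnGrassmannian μ P T)
    (Q : Matrix (Fin d) (Fin d) ℝ) (hQ : Qᵀ * Q = 1) (i j k l : Fin d) :
    ∑ z : (Fin d × Fin d) × Fin d × Fin d,
      (Q z.1.1 i * Q z.1.2 j * Q z.2.1 k * Q z.2.2 l) *
        Fm μ P z.1.1 z.1.2 z.2.1 z.2.2 = Fm μ P i j k l := by
  rw [← F_Q hPm hP Q hQ i j k l]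
  symm
  have h1 : ∀ (ω : Ω) (a b : Fin d), (Qᵀ * P ω * Q) a b
      = ∑ p : Fin d × Fin d, Q p.1 a * P ω p.1 p.2 * Q p.2 b := by
    intro ω a b
    rw [Fintype.sum_prod_type]
    simp only [Matrix.mul_apply, Matrix.transpose_apply, Finset.sum_mul]
    rw [Finset.sum_comm]
  have expand : ∀ ω : Ω, (Qᵀ * P ω * Q) i j * (Qᵀ * P ω * Q) k l
      = ∑ z : (Fin d × Fin d) × Fin d × Fin d,
          (Q z.1.1 i * Q z.1.2 j * Q z.2.1 k * Q z.2.2 l) *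
            (P ω z.1.1 z.1.2 * P ω z.2.1 z.2.2) := by
    intro ω
    rw [h1, h1, Finset.sum_mul_sum, ← Finset.sum_product']
    refine Finset.sum_congr rfl fun z _ => by ring
  calc ∫ ω, (Qᵀ * P ω * Q) i j * (Qᵀ * P ω * Q) k l ∂μ
      = ∫ ω, ∑ z : (Fin d × Fin d) × Fin d × Fin d,
          (Q z.1.1 i * Q z.1.2 j * Q z.2.1 k * Q z.2.2 l) *
            (P ω z.1.1 z.1.2 * P ω z.2.1 z.2.2) ∂μ := by
        exact integral_congr_ae (Filter.Eventually.of_forall expand)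
    _ = ∑ z : (Fin d × Fin d) × Fin d × Fin d,
          ∫ ω, (Q z.1.1 i * Q z.1.2 j * Q z.2.1 k * Q z.2.2 l) *
            (P ω z.1.1 z.1.2 * P ω z.2.1 z.2.2) ∂μ := by
        exact integral_finset_sum _ fun z _ =>
          (integ_prod hPm hP.1 z.1.1 z.1.2 z.2.1 z.2.2).const_mul _
    _ = _ := by
        refine Finset.sum_congr rfl fun z _ => ?_
        rw [MeasureTheory.integral_const_mul]; rfl

end Aux

section Aux2
variable {Ω : Type} [MeasurableSpace Ω] {μ : Measure Ω} {d T : ℕ}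
  {P : Ω → Matrix (Fin d) (Fin d) ℝ} [IsProbabilityMeasure μ]

lemma F_sign (hPm : Measurable P) (hP : UniformOnGrassmannian μ P T)
    (w : Fin d → ℝ) (hw : ∀ x, w x * w x = 1) (i j k l : Fin d) :
    (w i * w j * w k * w l) * Fm μ P i j k l = Fm μ P i j k l := by
  have hQ : (Matrix.of fun a b : Fin d => if a = b then w a else 0)ᵀ *
      (Matrix.of fun a b : Fin d => if a = b then w a else 0) = 1 := by
    ext a b
    simp only [Matrix.mul_apply, Matrix.transpose_apply, Matrix.of_apply, Matrix.one_apply,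
      ite_mul, zero_mul, mul_ite, mul_zero, Finset.sum_ite_eq', Finset.mem_univ, if_true]
    by_cases hab : a = b
    · subst hab; simp [hw a]
    · rw [if_neg (fun h => hab h.symm), if_neg hab]
  have := F_inv hPm hP _ hQ i j k l
  conv_rhs => rw [← this]
  simp only [Matrix.of_apply, ite_mul, zero_mul, mul_ite, mul_zero, Fintype.sum_prod_type,
    Finset.sum_ite_eq', Finset.mem_univ, if_true]

lemma F_perm (hPm : Measurable P) (hP : UniformOnGrassmannian μ P T)
    (σ : Equiv.Perm (Fin d)) (i j k l : Fin d) :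
    Fm μ P i j k l = Fm μ P (σ i) (σ j) (σ k) (σ l) := by
  have hQ : (Matrix.of fun a b : Fin d => if a = σ.symm b then (1:ℝ) else 0)ᵀ *
      (Matrix.of fun a b : Fin d => if a = σ.symm b then (1:ℝ) else 0) = 1 := by
    ext a b
    simp only [Matrix.mul_apply, Matrix.transpose_apply, Matrix.of_apply, Matrix.one_apply,
      ite_mul, zero_mul, mul_ite, mul_zero, mul_one, Finset.sum_ite_eq', Finset.mem_univ,
      if_true]
    by_cases hab : a = b
    · simp [hab]
    · have h2 : σ.symm b ≠ σ.symm a := fun h => hab (σ.symm.injective h.symm)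
      simp [hab, h2]
  have := F_inv hPm hP _ hQ (σ i) (σ j) (σ k) (σ l)
  rw [← this]
  simp only [Matrix.of_apply, ite_mul, zero_mul, one_mul, mul_ite, mul_zero, mul_one,
    Fintype.sum_prod_type, Finset.sum_ite_eq', Finset.mem_univ, if_true,
    Equiv.symm_apply_apply]

lemma F_swap12 (hP1 : ∀ᵐ ω ∂μ, IsOrthProj (P ω) T) (i j k l : Fin d) :
    Fm μ P i j k l = Fm μ P j i k l := by
  refine integral_congr_ae ?_
  filter_upwards [hP1] with ω h
  have hs : P ω i j = P ω j i := by
    conv_lhs => rw [← h.1, Matrix.transpose_apply]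
  rw [hs]

lemma F_swap34 (hP1 : ∀ᵐ ω ∂μ, IsOrthProj (P ω) T) (i j k l : Fin d) :
    Fm μ P i j k l = Fm μ P i j l k := by
  refine integral_congr_ae ?_
  filter_upwards [hP1] with ω h
  have hs : P ω k l = P ω l k := by
    conv_lhs => rw [← h.1, Matrix.transpose_apply]
  rw [hs]

lemma F_comm (i j k l : Fin d) : Fm μ P i j k l = Fm μ P k l i j := by
  unfold Fm
  refine integral_congr_ae (Filter.Eventually.of_forall fun ω => ?_)
  ring

end Aux2

section Aux3
variable {Ω : Type} [MeasurableSpace Ω] {μ : Measure Ω} {d T : ℕ}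
  {P : Ω → Matrix (Fin d) (Fin d) ℝ} [IsProbabilityMeasure μ]

lemma F_zero1 (hPm : Measurable P) (hP : UniformOnGrassmannian μ P T)
    {i j k l : Fin d} (hj : j ≠ i) (hk : k ≠ i) (hl : l ≠ i) :
    Fm μ P i j k l = 0 := by
  have h := F_sign hPm hP (fun x => if x = i then (-1:ℝ) else 1)
    (fun x => by split_ifs <;> norm_num) i j k l
  norm_num [if_neg hj, if_neg hk, if_neg hl] at h
  linarith

lemma F_zero2 (hPm : Measurable P) (hP : UniformOnGrassmannian μ P T)
    {i j k l : Fin d} (hi : i ≠ j) (hk : k ≠ j) (hl : l ≠ j) :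
    Fm μ P i j k l = 0 := by
  rw [F_swap12 hP.1]
  exact F_zero1 hPm hP hi hk hl

lemma F_zero3 (hPm : Measurable P) (hP : UniformOnGrassmannian μ P T)
    {i j k l : Fin d} (hi : i ≠ k) (hj : j ≠ k) (hl : l ≠ k) :
    Fm μ P i j k l = 0 := by
  rw [F_comm]
  exact F_zero1 hPm hP hl hi hj

lemma F_zero4 (hPm : Measurable P) (hP : UniformOnGrassmannian μ P T)
    {i j k l : Fin d} (hi : i ≠ l) (hj : j ≠ l) (hk : k ≠ l) :
    Fm μ P i j k l = 0 := by
  rw [F_comm]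
  exact F_zero2 hPm hP hk hi hj

lemma exists_perm_pair {i j z0 z1 : Fin d} (hij : i ≠ j) (hz : z0 ≠ z1) :
    ∃ σ : Equiv.Perm (Fin d), σ i = z0 ∧ σ j = z1 := by
  classical
  set σ1 := Equiv.swap i z0 with hσ1
  have h1 : σ1 i = z0 := Equiv.swap_apply_left i z0
  have hj' : σ1 j ≠ z0 := by
    intro h
    exact hij (σ1.injective (by rw [h1, h]))
  refine ⟨σ1.trans (Equiv.swap (σ1 j) z1), ?_, ?_⟩
  · simp only [Equiv.trans_apply, h1]
    exact Equiv.swap_apply_of_ne_of_ne (fun h => hj' h.symm) hz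
  · simp only [Equiv.trans_apply]
    exact Equiv.swap_apply_left _ _


set_option maxHeartbeats 2000000 in
lemma F_rot (hPm : Measurable P) (hP : UniformOnGrassmannian μ P T)
    {z0 z1 : Fin d} (hz : z0 ≠ z1) :
    Fm μ P z0 z0 z0 z0 = Fm μ P z0 z0 z1 z1 + 2 * Fm μ P z0 z1 z0 z1 := by
  classical
  have hQdef : ∃ Q : Matrix (Fin d) (Fin d) ℝ, Q = Matrix.of fun a i =>
      (if a = i then (if i = z0 ∨ i = z1 then (0:ℝ) else 1) else 0) +
      (if a = z0 then (if i = z0 then (3:ℝ)/5 else if i = z1 then -(4/5) else 0) else 0) +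
      (if a = z1 then (if i = z0 then (4:ℝ)/5 else if i = z1 then 3/5 else 0) else 0) :=
    ⟨_, rfl⟩
  obtain ⟨Q, hQdef⟩ := hQdef
  have hQ : Qᵀ * Q = 1 := by
    ext a b
    simp only [hQdef, Matrix.mul_apply, Matrix.transpose_apply, Matrix.of_apply,
      Matrix.one_apply, add_mul, mul_add, ite_mul, zero_mul, mul_ite, mul_zero,
      Finset.sum_add_distrib, Finset.sum_ite_eq', Finset.mem_univ, if_true]
    by_cases ha0 : a = z0 <;> by_cases ha1 : a = z1 <;>
      by_cases hb0 : b = z0 <;> by_cases hb1 : b = z1 <;>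
      by_cases hab : a = b <;>
      simp_all [eq_comm] <;> norm_num
  have key := F_inv hPm hP Q hQ z0 z0 z0 z0
  have hcol : ∀ a : Fin d, Q a z0 =
      (if a = z0 then (3:ℝ)/5 else 0) + (if a = z1 then (4:ℝ)/5 else 0) := by
    intro a
    simp only [hQdef, Matrix.of_apply]
    by_cases ha0 : a = z0 <;> by_cases ha1 : a = z1 <;> simp_all <;> norm_num
  rw [Finset.sum_congr rfl (fun z _ => by rw [hcol z.1.1, hcol z.1.2, hcol z.2.1, hcol z.2.2])]
    at key
  simp only [add_mul, mul_add, ite_mul, zero_mul, mul_ite, mul_zero,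
    Fintype.sum_prod_type, Finset.sum_add_distrib, Finset.sum_ite_eq',
    Finset.mem_univ, if_true] at key
  -- now key is a linear identity among Fm values at indices in {z0, z1}
  have hzero : ∀ i j k l : Fin d,
      ((i = z0 ∧ j = z0 ∧ k = z0 ∧ l = z1) ∨ (i = z0 ∧ j = z0 ∧ k = z1 ∧ l = z0) ∨
       (i = z0 ∧ j = z1 ∧ k = z0 ∧ l = z0) ∨ (i = z1 ∧ j = z0 ∧ k = z0 ∧ l = z0) ∨
       (i = z1 ∧ j = z1 ∧ k = z1 ∧ l = z0) ∨ (i = z1 ∧ j = z1 ∧ k = z0 ∧ l = z1) ∨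
       (i = z1 ∧ j = z0 ∧ k = z1 ∧ l = z1) ∨ (i = z0 ∧ j = z1 ∧ k = z1 ∧ l = z1)) →
      Fm μ P i j k l = 0 := by
    rintro i j k l (⟨h1,h2,h3,h4⟩|⟨h1,h2,h3,h4⟩|⟨h1,h2,h3,h4⟩|⟨h1,h2,h3,h4⟩|
      ⟨h1,h2,h3,h4⟩|⟨h1,h2,h3,h4⟩|⟨h1,h2,h3,h4⟩|⟨h1,h2,h3,h4⟩) <;> subst h1 <;> subst h2 <;>
      subst h3 <;> subst h4
    · exact F_zero4 hPm hP hz hz hz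
    · exact F_zero3 hPm hP hz hz hz
    · exact F_zero2 hPm hP hz hz hz
    · exact F_zero1 hPm hP hz hz hz
    · exact F_zero4 hPm hP hz.symm hz.symm hz.symm
    · exact F_zero3 hPm hP hz.symm hz.symm hz.symm
    · exact F_zero2 hPm hP hz.symm hz.symm hz.symm
    · exact F_zero1 hPm hP hz.symm hz.symm hz.symm
  obtain ⟨σ, hσ0, hσ1⟩ := exists_perm_pair hz.symm hz
  have hswap : ∀ i j k l : Fin d, Fm μ P i j k l =
      Fm μ P (σ i) (σ j) (σ k) (σ l) := F_perm hPm hP σ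
  have e1 : Fm μ P z1 z1 z1 z1 = Fm μ P z0 z0 z0 z0 := by rw [hswap z1 z1 z1 z1, hσ0]
  have e2 : Fm μ P z1 z1 z0 z0 = Fm μ P z0 z0 z1 z1 := by
    rw [hswap z1 z1 z0 z0, hσ0, hσ1]
  have e3 : Fm μ P z1 z0 z1 z0 = Fm μ P z0 z1 z0 z1 := by
    rw [hswap z1 z0 z1 z0, hσ0, hσ1]
  have e4 : Fm μ P z0 z1 z1 z0 = Fm μ P z0 z1 z0 z1 := by
    rw [F_swap34 hP.1 z0 z1 z1 z0]
  have e5 : Fm μ P z1 z0 z0 z1 = Fm μ P z0 z1 z0 z1 := by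
    rw [hswap z1 z0 z0 z1, hσ0, hσ1, F_swap34 hP.1 z0 z1 z1 z0]
  have z1' := hzero z0 z0 z0 z1 (by simp [hz, Ne.symm hz])
  have z2' := hzero z0 z0 z1 z0 (by simp [hz, Ne.symm hz])
  have z3' := hzero z0 z1 z0 z0 (by simp [hz, Ne.symm hz])
  have z4' := hzero z1 z0 z0 z0 (by simp [hz, Ne.symm hz])
  have z5' := hzero z1 z1 z1 z0 (by simp [hz, Ne.symm hz])
  have z6' := hzero z1 z1 z0 z1 (by simp [hz, Ne.symm hz])
  have z7' := hzero z1 z0 z1 z1 (by simp [hz, Ne.symm hz])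
  have z8' := hzero z0 z1 z1 z1 (by simp [hz, Ne.symm hz])
  rw [e1, e2, e3, e4, e5, z1', z2', z3', z4', z5', z6', z7', z8'] at key
  linarith

lemma F_struct (hPm : Measurable P) (hP : UniformOnGrassmannian μ P T) (hd : 2 ≤ d) :
    ∃ A B : ℝ, ∀ i j k l : Fin d, Fm μ P i j k l =
      A * ((if i = j then (1:ℝ) else 0) * (if k = l then (1:ℝ) else 0))
      + B * ((if i = k then (1:ℝ) else 0) * (if j = l then (1:ℝ) else 0)
           + (if i = l then (1:ℝ) else 0) * (if j = k then (1:ℝ) else 0)) := by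
  classical
  have h0 : 0 < d := by omega
  have h1 : 1 < d := by omega
  set z0 : Fin d := ⟨0, h0⟩
  set z1 : Fin d := ⟨1, h1⟩
  have hz : z0 ≠ z1 := by simp [z0, z1, Fin.ext_iff]
  refine ⟨Fm μ P z0 z0 z1 z1, Fm μ P z0 z1 z0 z1, ?_⟩
  have hA : ∀ i j : Fin d, i ≠ j → Fm μ P i i j j = Fm μ P z0 z0 z1 z1 := by
    intro i j hij
    obtain ⟨σ, h1, h2⟩ := exists_perm_pair hij hz
    rw [F_perm hPm hP σ, h1, h2]
  have hB : ∀ i j : Fin d, i ≠ j → Fm μ P i j i j = Fm μ P z0 z1 z0 z1 := by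
    intro i j hij
    obtain ⟨σ, h1, h2⟩ := exists_perm_pair hij hz
    rw [F_perm hPm hP σ, h1, h2]
  have hB' : ∀ i j : Fin d, i ≠ j → Fm μ P i j j i = Fm μ P z0 z1 z0 z1 := by
    intro i j hij
    rw [F_swap34 hP.1, hB i j hij]
  have hC : ∀ i : Fin d, Fm μ P i i i i
      = Fm μ P z0 z0 z1 z1 + 2 * Fm μ P z0 z1 z0 z1 := by
    intro i
    have := F_perm hPm hP (Equiv.swap i z0) i i i i
    rw [Equiv.swap_apply_left] at this
    rw [this]
    exact F_rot hPm hP hz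
  intro i j k l
  by_cases hij : i = j
  · subst hij
    by_cases hkl : k = l
    · subst hkl
      by_cases hik : i = k
      · subst hik
        rw [hC i]; simp; ring
      · rw [hA i k hik]; simp [hik]
    · have hzero : Fm μ P i i k l = 0 := by
        by_cases hki : k = i
        · subst hki
          exact F_zero4 hPm hP hkl hkl hkl
        · exact F_zero3 hPm hP (fun h => hki h.symm) (fun h => hki h.symm)
            (fun h => hkl h.symm)
      rw [hzero]
      by_cases hik : i = k <;> by_cases hil : i = l <;> simp_all
  · by_cases hkl : k = l
    · subst hkl
      have hzero : Fm μ P i j k k = 0 := by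
        by_cases hki : k = i
        · subst hki
          exact F_zero2 hPm hP hij hij hij
        · exact F_zero1 hPm hP (fun h => hij h.symm) hki hki
      rw [hzero]
      by_cases hik : i = k <;> by_cases hjk : j = k <;> simp_all
    · by_cases hik : i = k
      · subst hik
        by_cases hjl : j = l
        · subst hjl
          rw [hB i j hij]
          simp [hij, Ne.symm hij]
        · have hzero : Fm μ P i j i l = 0 :=
            F_zero2 hPm hP hij hij (fun h => hjl h.symm)
          rw [hzero]
          simp [hjl, hij, Ne.symm hij]
      · by_cases hil : i = l
        · subst hil
          by_cases hjk : j = k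
          · subst hjk
            rw [hB' i j hij]
            simp [hij, Ne.symm hij]
          · have hzero : Fm μ P i j k i = 0 :=
              F_zero2 hPm hP hij (fun h => hjk h.symm) hij
            rw [hzero]
            simp [hij, hik, hjk, hkl, Ne.symm hij]
        · have hzero : Fm μ P i j k l = 0 :=
            F_zero1 hPm hP (fun h => hij h.symm) (fun h => hik h.symm)
              (fun h => hil h.symm)
          rw [hzero]
          simp [hij, hik, hil]

lemma trace_sq (hPm : Measurable P) (hP : UniformOnGrassmannian μ P T) :
    ∑ i, ∑ k, Fm μ P i i k k = (T : ℝ) ^ 2 := by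
  have h1 : ∀ i : Fin d, Integrable (fun ω => ∑ k, P ω i i * P ω k k) μ :=
    fun i => integrable_finset_sum _ fun k _ => integ_prod hPm hP.1 i i k k
  have step : ∑ i, ∑ k, Fm μ P i i k k = ∫ ω, ∑ i, ∑ k, P ω i i * P ω k k ∂μ := by
    rw [integral_finset_sum _ fun i _ => h1 i]
    exact Finset.sum_congr rfl fun i _ =>
      (integral_finset_sum _ fun k _ => integ_prod hPm hP.1 i i k k).symm
  rw [step]
  have : ∫ ω, ((T:ℝ)^2) ∂μ = (T:ℝ)^2 := by
    rw [integral_const]; simp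
  rw [← this]
  refine integral_congr_ae ?_
  filter_upwards [hP.1] with ω h
  have htr : ∑ i, P ω i i = (T:ℝ) := by
    have := h.2.2
    simpa [Matrix.trace, Matrix.diag] using this
  calc ∑ i, ∑ k, P ω i i * P ω k k = (∑ i, P ω i i) * (∑ k, P ω k k) := by
        rw [Finset.sum_mul]
        exact Finset.sum_congr rfl fun i _ => by rw [Finset.mul_sum]
    _ = (T:ℝ)^2 := by rw [htr]; ring

lemma trace_lin (hPm : Measurable P) (hP : UniformOnGrassmannian μ P T) :
    ∑ i, ∑ k, Fm μ P i k k i = (T : ℝ) := by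
  have h1 : ∀ i : Fin d, Integrable (fun ω => ∑ k, P ω i k * P ω k i) μ :=
    fun i => integrable_finset_sum _ fun k _ => integ_prod hPm hP.1 i k k i
  have step : ∑ i, ∑ k, Fm μ P i k k i = ∫ ω, ∑ i, ∑ k, P ω i k * P ω k i ∂μ := by
    rw [integral_finset_sum _ fun i _ => h1 i]
    exact Finset.sum_congr rfl fun i _ =>
      (integral_finset_sum _ fun k _ => integ_prod hPm hP.1 i k k i).symm
  rw [step]
  have : ∫ ω, ((T:ℝ)) ∂μ = (T:ℝ) := by
    rw [integral_const]; simp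
  rw [← this]
  refine integral_congr_ae ?_
  filter_upwards [hP.1] with ω h
  have htr : (P ω).trace = (T:ℝ) := h.2.2
  calc ∑ i, ∑ k, P ω i k * P ω k i = ∑ i, (P ω * P ω) i i := by
        exact Finset.sum_congr rfl fun i _ => by rw [Matrix.mul_apply]
    _ = (P ω).trace := by rw [h.2.1]; simp [Matrix.trace, Matrix.diag]
    _ = (T:ℝ) := htr

end Aux3
/-- Let `P` be uniformly distributed over `Gr(T, d)` and let `P₀` be a fixed
rank-`r` orthogonal projection. If `d ≥ 2` then
`E[P P₀ P] = ((T²d + T(d−2))/((d−1)d(d+2)))·P₀ + (rT(d−T)/((d−1)d(d+2)))·I_d`;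
moreover, if `d = 1` then `E[P P₀ P] = T·P₀`. -/
theorem stmt_6 {Ω : Type} [MeasurableSpace Ω] (μ : Measure Ω) [IsProbabilityMeasure μ]
    (T d r : ℕ) (hTd : T ≤ d)
    (P : Ω → Matrix (Fin d) (Fin d) ℝ) (hPm : Measurable P)
    (hP : UniformOnGrassmannian μ P T)
    (P0 : Matrix (Fin d) (Fin d) ℝ) (hP0 : IsOrthProj P0 r) :
    (2 ≤ d → ∀ i j, ∫ ω, (P ω * P0 * P ω) i j ∂μ =
      (((T : ℝ) ^ 2 * d + T * ((d : ℝ) - 2)) / (((d : ℝ) - 1) * d * ((d : ℝ) + 2))) * P0 i j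
        + (((r : ℝ) * T * ((d : ℝ) - T)) / (((d : ℝ) - 1) * d * ((d : ℝ) + 2)))
          * (if i = j then 1 else 0)) ∧
    (d = 1 → ∀ i j, ∫ ω, (P ω * P0 * P ω) i j ∂μ = (T : ℝ) * P0 i j) := by
  classical
  have hint : ∀ i l : Fin d, ∫ ω, (P ω * P0 * P ω) i l ∂μ
      = ∑ j, ∑ k, P0 j k * Fm μ P i j k l := by
    intro i l
    have hpt : ∀ ω, (P ω * P0 * P ω) i l = ∑ j, ∑ k, P0 j k * (P ω i j * P ω k l) := by
      intro ω
      simp only [Matrix.mul_apply, Finset.sum_mul]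
      rw [Finset.sum_comm]
      exact Finset.sum_congr rfl fun j _ => Finset.sum_congr rfl fun k _ => by ring
    calc ∫ ω, (P ω * P0 * P ω) i l ∂μ
        = ∫ ω, ∑ j, ∑ k, P0 j k * (P ω i j * P ω k l) ∂μ :=
          integral_congr_ae (Filter.Eventually.of_forall hpt)
      _ = ∑ j, ∑ k, ∫ ω, P0 j k * (P ω i j * P ω k l) ∂μ := by
          refine (integral_finset_sum _ fun j _ =>
            integrable_finset_sum _ fun k _ => (integ_prod hPm hP.1 i j k l).const_mul _).trans ?_
          exact Finset.sum_congr rfl fun j _ =>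
            integral_finset_sum _ fun k _ => (integ_prod hPm hP.1 i j k l).const_mul _
      _ = ∑ j, ∑ k, P0 j k * Fm μ P i j k l := by
          exact Finset.sum_congr rfl fun j _ => Finset.sum_congr rfl fun k _ =>
            MeasureTheory.integral_const_mul _ _
  constructor
  · intro hd i l
    obtain ⟨A, B, hF⟩ := F_struct hPm hP hd
    -- trace equations
    have eq1 : A * (d:ℝ)^2 + 2 * B * d = (T:ℝ)^2 := by
      have h := trace_sq hPm hP
      have hent : ∀ i k : Fin d, Fm μ P i i k k
          = A + 2 * B * (if i = k then (1:ℝ) else 0) := by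
        intro i k
        rw [hF]
        by_cases hik : i = k
        · subst hik; simp; try ring
        · simp [hik]; try ring
      rw [Finset.sum_congr rfl (fun i _ => Finset.sum_congr rfl fun k _ => hent i k)] at h
      simp only [Finset.sum_add_distrib, Finset.sum_const, Finset.card_univ,
        Fintype.card_fin, nsmul_eq_mul, Finset.mul_sum, mul_ite, mul_one, mul_zero,
        Finset.sum_ite_eq, Finset.mem_univ, if_true] at h
      rw [← h]; ring
    have eq2 : A * (d:ℝ) + B * ((d:ℝ) + (d:ℝ)^2) = (T:ℝ) := by
      have h := trace_lin hPm hP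
      have hent : ∀ i k : Fin d, Fm μ P i k k i
          = (A + B) * (if i = k then (1:ℝ) else 0) + B := by
        intro i k
        rw [hF]
        by_cases hik : i = k
        · subst hik; simp; ring
        · simp [hik, Ne.symm hik]
      rw [Finset.sum_congr rfl (fun i _ => Finset.sum_congr rfl fun k _ => hent i k)] at h
      simp only [Finset.sum_add_distrib, Finset.sum_const, Finset.card_univ,
        Fintype.card_fin, nsmul_eq_mul, Finset.mul_sum, mul_ite, mul_one, mul_zero,
        Finset.sum_ite_eq, Finset.mem_univ, if_true] at h
      rw [← h]; ring
    set D : ℝ := ((d:ℝ) - 1) * d * ((d:ℝ) + 2) with hD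
    have hd2 : (2:ℝ) ≤ (d:ℝ) := by exact_mod_cast hd
    have hDpos : 0 < D := by
      rw [hD]; nlinarith
    have hB_D : B * D = (T:ℝ) * ((d:ℝ) - T) := by
      rw [hD]; linear_combination (d:ℝ) * eq2 - eq1
    have hAB_D : (A + B) * D = (T:ℝ)^2 * d + T * ((d:ℝ) - 2) := by
      rw [hD]; linear_combination (d:ℝ) * eq1 + ((d:ℝ) - 2) * eq2
    have hc1 : ((T:ℝ)^2 * d + T * ((d:ℝ) - 2)) / D = A + B := by
      rw [← hAB_D]; field_simp
    have hc2 : ((r:ℝ) * T * ((d:ℝ) - T)) / D = B * r := by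
      rw [div_eq_iff hDpos.ne']
      linear_combination (-(r:ℝ)) * hB_D
    rw [hint i l, hc1, hc2]
    -- compute the double sum
    have hsum : ∑ j, ∑ k, P0 j k * Fm μ P i j k l
        = A * P0 i l + B * P0 l i + B * (if i = l then (1:ℝ) else 0) * (∑ j, P0 j j) := by
      rw [Finset.sum_congr rfl (fun j _ => Finset.sum_congr rfl fun k _ => by rw [hF])]
      simp only [mul_add, Finset.sum_add_distrib, mul_ite, ite_mul, mul_one, one_mul,
        mul_zero, zero_mul, Finset.sum_ite_eq, Finset.sum_ite_eq', Finset.mem_univ,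
        if_true, Finset.mul_sum, Finset.sum_mul]
      rw [Finset.sum_comm]
      simp only [Finset.sum_ite_eq, Finset.sum_ite_eq', Finset.mem_univ, if_true]
      by_cases hil : i = l <;> simp [hil, mul_comm] <;> ring
    rw [hsum]
    have hsymP0 : P0 l i = P0 i l := by
      conv_lhs => rw [← hP0.1, Matrix.transpose_apply]
    have htr : ∑ x : Fin d, P0 x x = (r:ℝ) := by
      simpa [Matrix.trace, Matrix.diag] using hP0.2.2
    rw [hsymP0, htr]
    ring
  · intro hd1 i l
    subst hd1
    have hT : (T:ℝ) * (T:ℝ) = (T:ℝ) := by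
      have hex : ∃ ω, IsOrthProj (P ω) T := by
        have : ∀ᵐ ω ∂μ, IsOrthProj (P ω) T := hP.1
        exact this.exists
      obtain ⟨ω, hω⟩ := hex
      have h00 : P ω 0 0 = (T:ℝ) := by
        have := hω.2.2
        simpa [Matrix.trace, Matrix.diag, Fin.sum_univ_one] using this
      have := congrFun (congrFun hω.2.1 0) 0
      rw [Matrix.mul_apply] at this
      simp [Fin.sum_univ_one, h00] at this
      linarith [this]
    have hi : i = 0 := Subsingleton.elim i 0
    have hl : l = 0 := Subsingleton.elim l 0
    subst hi; subst hl
    have hpt : ∀ᵐ ω ∂μ, (P ω * P0 * P ω) 0 0 = (T:ℝ) * P0 0 0 := by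
      filter_upwards [hP.1] with ω h
      have h00 : P ω 0 0 = (T:ℝ) := by
        have := h.2.2
        simpa [Matrix.trace, Matrix.diag, Fin.sum_univ_one] using this
      rw [Matrix.mul_apply]
      simp only [Fin.sum_univ_one, Matrix.mul_apply, h00]
      calc (T:ℝ) * P0 0 0 * (T:ℝ) = ((T:ℝ) * (T:ℝ)) * P0 0 0 := by ring
        _ = (T:ℝ) * P0 0 0 := by rw [hT]
    rw [integral_congr_ae hpt]
    rw [integral_const]
    simp
end

section
/- Let d ≥ 2, T ≤ d, let V be uniformly distributed over the Stiefel manifold St(T, d) and set P = VVᵀ, a uniformly distributed rank-T orthogonal projection. Fix i ∈ [d] and let E_ii = e_i e_iᵀ. Then E[P E_ii P] = [ (T²d + T(d−2)) / ((d−1)d(d+2)) ] · E_ii + [ T(d−T) / ((d−1)d(d+2)) ] · I_d. In particular, E[(P E_ii P)_{ii}] = T(T+2)/(d(d+2)), E[(P E_ii P)_{jj}] = T(d−T)/((d−1)d(d+2)) for j ≠ i, and E[(P E_ii P)_{jk}] = 0 for j ≠ k. -/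
open MeasureTheory ProbabilityTheory Matrix
open scoped Classical

/-- A random `d × T` matrix is uniformly distributed over the Stiefel manifold `St(T, d)`:
its columns are a.s. orthonormal and `Q V ≍ V` for every orthogonal `Q ∈ O(d)`. -/
def UniformOnStiefel {Ω : Type*} [MeasurableSpace Ω] (μ : Measure Ω) {d T : ℕ}
    (V : Ω → Matrix (Fin d) (Fin T) ℝ) : Prop :=
  (∀ᵐ ω ∂μ, (V ω)ᵀ * V ω = 1) ∧
  ∀ Q : Matrix (Fin d) (Fin d) ℝ, Qᵀ * Q = 1 →
    Measure.map (fun ω => Q * V ω) μ = Measure.map V μ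


section Stmt7Aux

open MeasureTheory Matrix

set_option linter.unusedSectionVars false

variable {Ω : Type} [MeasurableSpace Ω] {μ : Measure Ω} [IsProbabilityMeasure μ]
  {T d : ℕ} {V : Ω → Matrix (Fin d) (Fin T) ℝ}

lemma measEntry' {m n : Type*} (a : m) (b : n) :
    Measurable (fun A : Matrix m n ℝ => A a b) :=
  (measurable_pi_apply b).comp (measurable_pi_apply a)

lemma Pm_symm' (W : Matrix (Fin d) (Fin T) ℝ) (x y : Fin d) :
    (W * Wᵀ) x y = (W * Wᵀ) y x := by
  simp [Matrix.mul_apply, Matrix.transpose_apply, mul_comm]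

lemma measPm' (hVm : Measurable V) (a b : Fin d) :
    Measurable (fun ω => (V ω * (V ω)ᵀ) a b) := by
  have : (fun ω => (V ω * (V ω)ᵀ) a b) = fun ω => ∑ t, V ω a t * V ω b t := by
    funext ω; simp [Matrix.mul_apply, Matrix.transpose_apply]
  rw [this]
  exact Finset.measurable_sum _ fun t _ =>
    ((measEntry' a t).comp hVm).mul ((measEntry' b t).comp hVm)

lemma stdBM_transpose' (a b : Fin d) (c : ℝ) :
    (Matrix.single a b c)ᵀ = Matrix.single b a c := by
  ext x y
  simp [Matrix.transpose_apply, Matrix.single, Matrix.of_apply, and_comm]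

lemma PEP' (i j k : Fin d) (A : Matrix (Fin d) (Fin d) ℝ) :
    (A * Matrix.single i i (1 : ℝ) * A) j k = A j i * A i k := by
  rw [Matrix.mul_apply, Finset.sum_eq_single i]
  · rw [Matrix.mul_single_apply_same]; ring
  · intro y _ hy
    rw [Matrix.mul_single_apply_of_ne _ _ _ _ _ hy, zero_mul]
  · simp

lemma good_trace' {W : Matrix (Fin d) (Fin T) ℝ} (h : Wᵀ * W = 1) :
    ∑ z, (W * Wᵀ) z z = (T : ℝ) := by
  have h1 : (W * Wᵀ).trace = (T : ℝ) := by
    rw [Matrix.trace_mul_comm, h, Matrix.trace_one]; simp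
  simpa [Matrix.trace, Matrix.diag] using h1

lemma good_diag' {W : Matrix (Fin d) (Fin T) ℝ} (h : Wᵀ * W = 1) (x : Fin d) :
    0 ≤ (W * Wᵀ) x x ∧ (W * Wᵀ) x x ≤ (T : ℝ) := by
  have hnn : ∀ z, 0 ≤ (W * Wᵀ) z z := by
    intro z
    rw [Matrix.mul_apply]
    exact Finset.sum_nonneg fun t _ => mul_self_nonneg _
  refine ⟨hnn x, ?_⟩
  calc (W * Wᵀ) x x ≤ ∑ z, (W * Wᵀ) z z :=
        Finset.single_le_sum (fun z _ => hnn z) (Finset.mem_univ x)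
    _ = (T : ℝ) := good_trace' h

lemma good_bound' {W : Matrix (Fin d) (Fin T) ℝ} (h : Wᵀ * W = 1) (x y : Fin d) :
    |(W * Wᵀ) x y| ≤ (T : ℝ) := by
  have hb : |(W * Wᵀ) x y| ≤ ((W * Wᵀ) x x + (W * Wᵀ) y y) / 2 := by
    rw [Matrix.mul_apply]
    calc |∑ t, W x t * (Wᵀ) t y| ≤ ∑ t, |W x t * (Wᵀ) t y| :=
          Finset.abs_sum_le_sum_abs _ _
      _ ≤ ∑ t, (W x t * W x t + W y t * W y t) / 2 := by
          refine Finset.sum_le_sum fun t _ => ?_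
          rw [Matrix.transpose_apply, abs_mul]
          nlinarith [sq_nonneg (|W x t| - |W y t|), abs_nonneg (W x t), abs_nonneg (W y t),
            abs_mul_abs_self (W x t), abs_mul_abs_self (W y t)]
      _ = ((W * Wᵀ) x x + (W * Wᵀ) y y) / 2 := by
          rw [Matrix.mul_apply, Matrix.mul_apply]
          simp only [Matrix.transpose_apply]
          rw [eq_div_iff (by norm_num : (2:ℝ) ≠ 0), Finset.sum_mul, ← Finset.sum_add_distrib]
          refine Finset.sum_congr rfl fun t _ => by ring
  have h1 := good_diag' h x
  have h2 := good_diag' h y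
  linarith

lemma good_idem' {W : Matrix (Fin d) (Fin T) ℝ} (h : Wᵀ * W = 1) (x : Fin d) :
    ∑ y, (W * Wᵀ) x y * (W * Wᵀ) x y = (W * Wᵀ) x x := by
  have hPP : (W * Wᵀ) * (W * Wᵀ) = W * Wᵀ := by
    calc (W * Wᵀ) * (W * Wᵀ) = W * ((Wᵀ * W) * Wᵀ) := by
          simp only [Matrix.mul_assoc]
      _ = W * Wᵀ := by rw [h, Matrix.one_mul]
  have := congrFun (congrFun hPP x) x
  rw [Matrix.mul_apply] at this
  calc ∑ y, (W * Wᵀ) x y * (W * Wᵀ) x y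
      = ∑ y, (W * Wᵀ) x y * (W * Wᵀ) y x := by
        refine Finset.sum_congr rfl fun y _ => by rw [Pm_symm' W y x]
    _ = (W * Wᵀ) x x := this

lemma intPm2' (hVm : Measurable V) (hV1 : ∀ᵐ ω ∂μ, (V ω)ᵀ * V ω = 1) (a b c e : Fin d) :
    Integrable (fun ω => (V ω * (V ω)ᵀ) a b * (V ω * (V ω)ᵀ) c e) μ := by
  refine Integrable.mono' (integrable_const ((T : ℝ) * T))
    ((measPm' hVm a b).mul (measPm' hVm c e)).aestronglyMeasurable ?_
  filter_upwards [hV1] with ω hω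
  rw [Real.norm_eq_abs, abs_mul]
  exact mul_le_mul (good_bound' hω a b) (good_bound' hω c e) (abs_nonneg _) (Nat.cast_nonneg _)

lemma intPm1' (hVm : Measurable V) (hV1 : ∀ᵐ ω ∂μ, (V ω)ᵀ * V ω = 1) (a b : Fin d) :
    Integrable (fun ω => (V ω * (V ω)ᵀ) a b) μ := by
  refine Integrable.mono' (integrable_const (T : ℝ))
    (measPm' hVm a b).aestronglyMeasurable ?_
  filter_upwards [hV1] with ω hω
  rw [Real.norm_eq_abs]
  exact good_bound' hω a b

lemma inv_core' (hVm : Measurable V) (hV : UniformOnStiefel μ V)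
    {f : Matrix (Fin d) (Fin T) ℝ → ℝ} (hf : Measurable f)
    {Q : Matrix (Fin d) (Fin d) ℝ} (hQ : Qᵀ * Q = 1) :
    ∫ ω, f (Q * V ω) ∂μ = ∫ ω, f (V ω) ∂μ := by
  have hQV : Measurable (fun ω => Q * V ω) := by
    apply measurable_pi_lambda _ (fun x => measurable_pi_lambda _ (fun y => ?_))
    have : (fun ω => (Q * V ω) x y) = fun ω => ∑ z, Q x z * V ω z y := by
      funext ω; simp [Matrix.mul_apply]
    rw [this]
    exact Finset.measurable_sum _ fun z _ =>
      measurable_const.mul ((measEntry' z y).comp hVm)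
  rw [← integral_map hQV.aemeasurable hf.aestronglyMeasurable, hV.2 Q hQ,
    integral_map hVm.aemeasurable hf.aestronglyMeasurable]

lemma M2_conj' (hVm : Measurable V) (hV : UniformOnStiefel μ V)
    {Q : Matrix (Fin d) (Fin d) ℝ} (hQ : Qᵀ * Q = 1) (a b c e : Fin d) :
    ∫ ω, (Q * (V ω * (V ω)ᵀ) * Qᵀ) a b * (Q * (V ω * (V ω)ᵀ) * Qᵀ) c e ∂μ
      = ∫ ω, (V ω * (V ω)ᵀ) a b * (V ω * (V ω)ᵀ) c e ∂μ := by
  have hrw : ∀ W : Matrix (Fin d) (Fin T) ℝ, Q * (W * Wᵀ) * Qᵀ = (Q * W) * (Q * W)ᵀ := by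
    intro W; rw [Matrix.transpose_mul]; simp [Matrix.mul_assoc]
  have hmf : Measurable (fun W : Matrix (Fin d) (Fin T) ℝ =>
      (W * Wᵀ) a b * (W * Wᵀ) c e) :=
    (measPm' measurable_id a b).mul (measPm' measurable_id c e)
  have := inv_core' hVm hV hmf hQ
  simpa [hrw] using this

lemma m1_conj' (hVm : Measurable V) (hV : UniformOnStiefel μ V)
    {Q : Matrix (Fin d) (Fin d) ℝ} (hQ : Qᵀ * Q = 1) (a b : Fin d) :
    ∫ ω, (Q * (V ω * (V ω)ᵀ) * Qᵀ) a b ∂μ = ∫ ω, (V ω * (V ω)ᵀ) a b ∂μ := by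
  have hrw : ∀ W : Matrix (Fin d) (Fin T) ℝ, Q * (W * Wᵀ) * Qᵀ = (Q * W) * (Q * W)ᵀ := by
    intro W; rw [Matrix.transpose_mul]; simp [Matrix.mul_assoc]
  have := inv_core' hVm hV (measPm' (V := id) measurable_id a b) hQ
  simpa [hrw] using this

lemma sgnFlip_zero' (hVm : Measurable V) (hV : UniformOnStiefel μ V)
    (a b c e r : Fin d)
    (hprod : ((if a = r then (-1:ℝ) else 1) * (if b = r then (-1:ℝ) else 1))
      * ((if c = r then (-1:ℝ) else 1) * (if e = r then (-1:ℝ) else 1)) = -1) :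
    ∫ ω, (V ω * (V ω)ᵀ) a b * (V ω * (V ω)ᵀ) c e ∂μ = 0 := by
  set ε : Fin d → ℝ := fun x => if x = r then (-1:ℝ) else 1 with hε
  have hQ : (Matrix.diagonal ε)ᵀ * Matrix.diagonal ε = 1 := by
    rw [Matrix.diagonal_transpose, Matrix.diagonal_mul_diagonal]
    have : (fun i => ε i * ε i) = fun _ => (1:ℝ) := by
      funext x; simp only [hε]; split <;> norm_num
    rw [this]; exact Matrix.diagonal_one
  have key := M2_conj' hVm hV hQ a b c e
  have hentry : ∀ (M : Matrix (Fin d) (Fin d) ℝ) x y,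
      (Matrix.diagonal ε * M * (Matrix.diagonal ε)ᵀ) x y = ε x * M x y * ε y := by
    intro M x y
    rw [Matrix.diagonal_transpose, Matrix.mul_diagonal, Matrix.diagonal_mul]
  rw [show (fun ω => (Matrix.diagonal ε * (V ω * (V ω)ᵀ) * (Matrix.diagonal ε)ᵀ) a b
      * (Matrix.diagonal ε * (V ω * (V ω)ᵀ) * (Matrix.diagonal ε)ᵀ) c e)
      = fun ω => ((ε a * ε b) * (ε c * ε e)) *
        ((V ω * (V ω)ᵀ) a b * (V ω * (V ω)ᵀ) c e) from
    funext fun ω => by rw [hentry, hentry]; ring] at key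
  rw [integral_const_mul] at key
  have hc : (ε a * ε b) * (ε c * ε e) = -1 := hprod
  rw [hc] at key
  linarith

noncomputable def permMatS {d : ℕ} (σ : Equiv.Perm (Fin d)) : Matrix (Fin d) (Fin d) ℝ :=
  Matrix.of fun x y => if σ y = x then 1 else 0

lemma permMatS_orth (σ : Equiv.Perm (Fin d)) : (permMatS σ)ᵀ * permMatS σ = 1 := by
  ext x y
  simp only [Matrix.mul_apply, Matrix.transpose_apply, permMatS, Matrix.of_apply,
    Matrix.one_apply, ite_mul, one_mul, zero_mul]
  rw [Finset.sum_ite_eq Finset.univ (σ x)]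
  simp [EmbeddingLike.apply_eq_iff_eq, eq_comm]

lemma permMatS_conj (σ : Equiv.Perm (Fin d)) (M : Matrix (Fin d) (Fin d) ℝ) (x y : Fin d) :
    (permMatS σ * M * (permMatS σ)ᵀ) x y = M (σ.symm x) (σ.symm y) := by
  simp only [Matrix.mul_apply, Matrix.transpose_apply, permMatS, Matrix.of_apply,
    Equiv.apply_eq_iff_eq_symm_apply, ite_mul, mul_ite, one_mul, mul_one, zero_mul, mul_zero,
    Finset.sum_ite_eq', Finset.mem_univ, if_true]

lemma M2_perm' (hVm : Measurable V) (hV : UniformOnStiefel μ V)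
    (σ : Equiv.Perm (Fin d)) (a b c e : Fin d) :
    ∫ ω, (V ω * (V ω)ᵀ) (σ a) (σ b) * (V ω * (V ω)ᵀ) (σ c) (σ e) ∂μ
      = ∫ ω, (V ω * (V ω)ᵀ) a b * (V ω * (V ω)ᵀ) c e ∂μ := by
  have h := M2_conj' hVm hV (permMatS_orth σ) (σ a) (σ b) (σ c) (σ e)
  simp only [permMatS_conj, Equiv.symm_apply_apply] at h
  exact h.symm

lemma m1_perm' (hVm : Measurable V) (hV : UniformOnStiefel μ V)
    (σ : Equiv.Perm (Fin d)) (a b : Fin d) :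
    ∫ ω, (V ω * (V ω)ᵀ) (σ a) (σ b) ∂μ = ∫ ω, (V ω * (V ω)ᵀ) a b ∂μ := by
  have h := m1_conj' hVm hV (permMatS_orth σ) (σ a) (σ b)
  simp only [permMatS_conj, Equiv.symm_apply_apply] at h
  exact h.symm

lemma exists_perm_pair_s7 {p q p' q' : Fin d} (hpq : p ≠ q) (hpq' : p' ≠ q') :
    ∃ σ : Equiv.Perm (Fin d), σ p = p' ∧ σ q = q' := by
  classical
  set τ := Equiv.swap p p' with hτ
  by_cases h : τ q = q'
  · exact ⟨τ, Equiv.swap_apply_left p p', h⟩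
  · refine ⟨τ.trans (Equiv.swap (τ q) q'), ?_, ?_⟩
    · have hτp : τ p = p' := Equiv.swap_apply_left p p'
      have h1 : τ q ≠ p' := by
        intro hc
        exact hpq (τ.injective (by rw [hτp, hc]))
      simp only [Equiv.trans_apply, hτp]
      rw [Equiv.swap_apply_of_ne_of_ne (Ne.symm h1) hpq']
    · simp only [Equiv.trans_apply]
      exact Equiv.swap_apply_left _ _

noncomputable def rotMatS {d : ℕ} (p q : Fin d) : Matrix (Fin d) (Fin d) ℝ :=
  1 + (-(2:ℝ)/5) • (Matrix.single p p 1 + Matrix.single q q 1)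
    + ((4:ℝ)/5) • (Matrix.single p q 1 - Matrix.single q p 1)

lemma rotMatS_orth {p q : Fin d} (hpq : p ≠ q) : (rotMatS p q)ᵀ * rotMatS p q = 1 := by
  have hz1 : ∀ (y z : Fin d), Matrix.single y p (1:ℝ) * Matrix.single q z 1 = 0 :=
    fun y z => Matrix.single_mul_single_of_ne (1:ℝ) y p q hpq 1
  have hz2 : ∀ (y z : Fin d), Matrix.single y q (1:ℝ) * Matrix.single p z 1 = 0 :=
    fun y z => Matrix.single_mul_single_of_ne (1:ℝ) y q p hpq.symm 1
  set D : Matrix (Fin d) (Fin d) ℝ :=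
    Matrix.single p p 1 + Matrix.single q q 1 with hD
  set A : Matrix (Fin d) (Fin d) ℝ :=
    Matrix.single p q 1 - Matrix.single q p 1 with hA
  have hDD : D * D = D := by
    simp [hD, mul_add, add_mul, Matrix.single_mul_single_same, hz1, hz2]
  have hDA : D * A = A := by
    simp [hD, hA, mul_sub, add_mul, sub_mul, mul_add, Matrix.single_mul_single_same, hz1, hz2]
  have hAD : A * D = A := by
    simp only [hD, hA, sub_mul, mul_add, mul_sub, Matrix.single_mul_single_same, hz1, hz2,
      one_mul, zero_sub, sub_zero, add_zero, zero_add]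
    abel
  have hAA : A * A = -D := by
    simp only [hD, hA, sub_mul, mul_sub, Matrix.single_mul_single_same, hz1, hz2, one_mul]
    abel
  have hDT : Dᵀ = D := by simp [hD, Matrix.transpose_add, stdBM_transpose']
  have hAT : Aᵀ = -A := by
    simp only [hA, Matrix.transpose_sub, stdBM_transpose']; abel
  have hQT : (rotMatS p q)ᵀ = 1 + (-(2:ℝ)/5) • D + (-(4:ℝ)/5) • A := by
    simp only [rotMatS, Matrix.transpose_add, Matrix.transpose_smul, Matrix.transpose_one,
      ← hD, ← hA, hDT, hAT, smul_neg]
    module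
  rw [hQT]
  show (1 + (-(2:ℝ)/5) • D + (-(4:ℝ)/5) • A) * (1 + (-(2:ℝ)/5) • D + ((4:ℝ)/5) • A) = 1
  simp only [mul_add, add_mul, one_mul, mul_one, smul_mul_assoc, Matrix.mul_smul,
    hDD, hDA, hAD, hAA, smul_smul, smul_neg]
  module

lemma rotMatS_row (p q : Fin d) (hpq : p ≠ q) (M : Matrix (Fin d) (Fin d) ℝ) (y : Fin d) :
    (rotMatS p q * M) p y = (3/5:ℝ) * M p y + (4/5:ℝ) * M q y := by
  have hz1 : (Matrix.single q q (1:ℝ) * M) p y = 0 :=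
    Matrix.single_mul_apply_of_ne (1:ℝ) q q p y hpq M
  have hz2 : (Matrix.single q p (1:ℝ) * M) p y = 0 :=
    Matrix.single_mul_apply_of_ne (1:ℝ) q p p y hpq M
  simp only [rotMatS, add_mul, smul_mul_assoc, one_mul, sub_mul,
    Matrix.add_apply, Matrix.smul_apply, Matrix.sub_apply,
    Matrix.single_mul_apply_same, hz1, hz2]
  simp only [smul_eq_mul]
  ring

lemma rotMatS_col (p q : Fin d) (hpq : p ≠ q) (N : Matrix (Fin d) (Fin d) ℝ) (x : Fin d) :
    (N * (rotMatS p q)ᵀ) x p = (3/5:ℝ) * N x p + (4/5:ℝ) * N x q := by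
  have hz1 : (N * Matrix.single q q (1:ℝ)) x p = 0 :=
    Matrix.mul_single_apply_of_ne (1:ℝ) q q x p hpq N
  have hz2 : (N * Matrix.single p q (1:ℝ)) x p = 0 :=
    Matrix.mul_single_apply_of_ne (1:ℝ) p q x p hpq N
  simp only [rotMatS, Matrix.transpose_add, Matrix.transpose_smul, Matrix.transpose_one,
    Matrix.transpose_sub, stdBM_transpose',
    mul_add, Matrix.mul_smul, mul_one, mul_sub,
    Matrix.add_apply, Matrix.smul_apply, Matrix.sub_apply,
    Matrix.mul_single_apply_same, hz1, hz2]
  simp only [smul_eq_mul]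
  ring

lemma rotMatS_pp (p q : Fin d) (hpq : p ≠ q) (M : Matrix (Fin d) (Fin d) ℝ)
    (hsym : M q p = M p q) :
    (rotMatS p q * M * (rotMatS p q)ᵀ) p p
      = (9/25:ℝ) * M p p + (24/25:ℝ) * M p q + (16/25:ℝ) * M q q := by
  rw [rotMatS_col p q hpq, rotMatS_row p q hpq, rotMatS_row p q hpq, hsym]
  ring

end Stmt7Aux


/-- Let `d ≥ 2`, `T ≤ d`, `V` uniform on the Stiefel manifold `St(T,d)` and
`P = VVᵀ`. For fixed `i`, with `E_ii = e_i e_iᵀ`,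
`E[P E_ii P] = ((T²d + T(d−2))/((d−1)d(d+2)))·E_ii + (T(d−T)/((d−1)d(d+2)))·I_d`;
in particular `E[(P E_ii P)_{ii}] = T(T+2)/(d(d+2))`,
`E[(P E_ii P)_{jj}] = T(d−T)/((d−1)d(d+2))` for `j ≠ i`, and
`E[(P E_ii P)_{jk}] = 0` for `j ≠ k`. -/
theorem stmt_7 {Ω : Type} [MeasurableSpace Ω] (μ : Measure Ω) [IsProbabilityMeasure μ]
    (T d : ℕ) (hd : 2 ≤ d) (hTd : T ≤ d)
    (V : Ω → Matrix (Fin d) (Fin T) ℝ) (hVm : Measurable V)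
    (hV : UniformOnStiefel μ V)
    (i : Fin d) :
    (∀ j k, ∫ ω, ((V ω * (V ω)ᵀ) * Matrix.single i i (1 : ℝ) * (V ω * (V ω)ᵀ)) j k ∂μ =
        (((T : ℝ) ^ 2 * d + T * ((d : ℝ) - 2)) / (((d : ℝ) - 1) * d * ((d : ℝ) + 2)))
            * Matrix.single i i (1 : ℝ) j k
          + (((T : ℝ) * ((d : ℝ) - T)) / (((d : ℝ) - 1) * d * ((d : ℝ) + 2)))
            * (if j = k then 1 else 0)) ∧
    (∫ ω, ((V ω * (V ω)ᵀ) * Matrix.single i i (1 : ℝ) * (V ω * (V ω)ᵀ)) i i ∂μ =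
        (T : ℝ) * ((T : ℝ) + 2) / ((d : ℝ) * ((d : ℝ) + 2))) ∧
    (∀ j, j ≠ i →
      ∫ ω, ((V ω * (V ω)ᵀ) * Matrix.single i i (1 : ℝ) * (V ω * (V ω)ᵀ)) j j ∂μ =
        (T : ℝ) * ((d : ℝ) - T) / (((d : ℝ) - 1) * d * ((d : ℝ) + 2))) ∧
    (∀ j k, j ≠ k →
      ∫ ω, ((V ω * (V ω)ᵀ) * Matrix.single i i (1 : ℝ) * (V ω * (V ω)ᵀ)) j k ∂μ = 0) := by
  classical
  have hV1 := hV.1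
  have h2d : (2:ℝ) ≤ (d:ℝ) := by exact_mod_cast hd
  have hd0 : (d:ℝ) ≠ 0 := by linarith
  have hd1 : (d:ℝ) - 1 ≠ 0 := by linarith
  have hd2 : (d:ℝ) + 2 ≠ 0 := by linarith
  obtain ⟨q0, hq0⟩ : ∃ q0 : Fin d, q0 ≠ i :=
    Fintype.exists_ne_of_one_lt_card (by simpa using (by omega : 1 < d)) i
  have hiq : i ≠ q0 := Ne.symm hq0
  -- All diagonal fourth moments are equal
  have F1 : ∀ x : Fin d,
      (∫ ω, (V ω * (V ω)ᵀ) x x * (V ω * (V ω)ᵀ) x x ∂μ)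
        = ∫ ω, (V ω * (V ω)ᵀ) i i * (V ω * (V ω)ᵀ) i i ∂μ := by
    intro x
    have := M2_perm' hVm hV (Equiv.swap i x) i i i i
    simpa [Equiv.swap_apply_left] using this
  have F2 : ∀ x y : Fin d, x ≠ y →
      (∫ ω, (V ω * (V ω)ᵀ) x y * (V ω * (V ω)ᵀ) x y ∂μ)
        = ∫ ω, (V ω * (V ω)ᵀ) i q0 * (V ω * (V ω)ᵀ) i q0 ∂μ := by
    intro x y hxy
    obtain ⟨σ, hσ1, hσ2⟩ := exists_perm_pair_s7 hiq hxy
    have := M2_perm' hVm hV σ i q0 i q0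
    rw [hσ1, hσ2] at this
    exact this
  have F3 : ∀ x y : Fin d, x ≠ y →
      (∫ ω, (V ω * (V ω)ᵀ) x x * (V ω * (V ω)ᵀ) y y ∂μ)
        = ∫ ω, (V ω * (V ω)ᵀ) i i * (V ω * (V ω)ᵀ) q0 q0 ∂μ := by
    intro x y hxy
    obtain ⟨σ, hσ1, hσ2⟩ := exists_perm_pair_s7 hiq hxy
    have := M2_perm' hVm hV σ i i q0 q0
    rw [hσ1, hσ2] at this
    exact this
  -- E[P_ii] = T / d
  have F4 : (d:ℝ) * (∫ ω, (V ω * (V ω)ᵀ) i i ∂μ) = (T:ℝ) := by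
    have hall : ∀ x : Fin d, (∫ ω, (V ω * (V ω)ᵀ) x x ∂μ)
        = ∫ ω, (V ω * (V ω)ᵀ) i i ∂μ := by
      intro x
      have := m1_perm' hVm hV (Equiv.swap i x) i i
      simpa [Equiv.swap_apply_left] using this
    have hsum : ∑ x : Fin d, (∫ ω, (V ω * (V ω)ᵀ) x x ∂μ) = (T:ℝ) := by
      rw [← integral_finset_sum _ (fun x _ => intPm1' hVm hV1 x x)]
      have hc : (∫ ω, ∑ x : Fin d, (V ω * (V ω)ᵀ) x x ∂μ) = ∫ (_ : Ω), (T:ℝ) ∂μ := by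
        apply integral_congr_ae
        filter_upwards [hV1] with ω h
        exact good_trace' h
      rw [hc]
      simp
    calc (d:ℝ) * (∫ ω, (V ω * (V ω)ᵀ) i i ∂μ)
        = ∑ _x : Fin d, (∫ ω, (V ω * (V ω)ᵀ) i i ∂μ) := by
          rw [Finset.sum_const, Finset.card_univ, Fintype.card_fin, nsmul_eq_mul]
      _ = ∑ x : Fin d, (∫ ω, (V ω * (V ω)ᵀ) x x ∂μ) :=
          Finset.sum_congr rfl fun x _ => (hall x).symm
      _ = (T:ℝ) := hsum
  -- equation 1 : d*A + d*(d-1)*B = T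
  have hx : (∫ ω, (V ω * (V ω)ᵀ) i i ∂μ)
      = (∫ ω, (V ω * (V ω)ᵀ) i i * (V ω * (V ω)ᵀ) i i ∂μ)
        + ((d:ℝ)-1) * (∫ ω, (V ω * (V ω)ᵀ) i q0 * (V ω * (V ω)ᵀ) i q0 ∂μ) := by
    have h5 : ∑ y : Fin d, (∫ ω, (V ω * (V ω)ᵀ) i y * (V ω * (V ω)ᵀ) i y ∂μ)
        = ∫ ω, (V ω * (V ω)ᵀ) i i ∂μ := by
      rw [← integral_finset_sum _ (fun y _ => intPm2' hVm hV1 i y i y)]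
      apply integral_congr_ae
      filter_upwards [hV1] with ω h
      exact good_idem' h i
    have h5' : ∑ y : Fin d, (∫ ω, (V ω * (V ω)ᵀ) i y * (V ω * (V ω)ᵀ) i y ∂μ)
        = (∫ ω, (V ω * (V ω)ᵀ) i i * (V ω * (V ω)ᵀ) i i ∂μ)
          + ((d:ℝ)-1) * (∫ ω, (V ω * (V ω)ᵀ) i q0 * (V ω * (V ω)ᵀ) i q0 ∂μ) := by
      rw [← Finset.add_sum_erase _ _ (Finset.mem_univ i)]
      congr 1
      calc ∑ y ∈ Finset.univ.erase i,
            (∫ ω, (V ω * (V ω)ᵀ) i y * (V ω * (V ω)ᵀ) i y ∂μ)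
          = ∑ _y ∈ Finset.univ.erase i,
            (∫ ω, (V ω * (V ω)ᵀ) i q0 * (V ω * (V ω)ᵀ) i q0 ∂μ) :=
            Finset.sum_congr rfl fun y hy =>
              F2 i y (Ne.symm (Finset.ne_of_mem_erase hy))
        _ = ((d:ℝ)-1) * (∫ ω, (V ω * (V ω)ᵀ) i q0 * (V ω * (V ω)ᵀ) i q0 ∂μ) := by
            rw [Finset.sum_const, Finset.card_erase_of_mem (Finset.mem_univ i),
              Finset.card_univ, Fintype.card_fin, nsmul_eq_mul,
              Nat.cast_sub (by omega : 1 ≤ d), Nat.cast_one]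
    exact h5.symm.trans h5'
  have eq1 : (d:ℝ) * (∫ ω, (V ω * (V ω)ᵀ) i i * (V ω * (V ω)ᵀ) i i ∂μ)
      + (d:ℝ)*((d:ℝ)-1) * (∫ ω, (V ω * (V ω)ᵀ) i q0 * (V ω * (V ω)ᵀ) i q0 ∂μ)
      = (T:ℝ) := by
    linear_combination (-(d:ℝ)) * hx + F4
  -- equation 3 : d*A + d*(d-1)*G = T^2
  have eq3 : (d:ℝ) * (∫ ω, (V ω * (V ω)ᵀ) i i * (V ω * (V ω)ᵀ) i i ∂μ)
      + (d:ℝ)*((d:ℝ)-1) * (∫ ω, (V ω * (V ω)ᵀ) i i * (V ω * (V ω)ᵀ) q0 q0 ∂μ)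
      = (T:ℝ)^2 := by
    have h6a : (∫ ω, (∑ x : Fin d, (V ω * (V ω)ᵀ) x x)
        * (∑ y : Fin d, (V ω * (V ω)ᵀ) y y) ∂μ) = (T:ℝ)^2 := by
      have hc : (∫ ω, (∑ x : Fin d, (V ω * (V ω)ᵀ) x x)
          * (∑ y : Fin d, (V ω * (V ω)ᵀ) y y) ∂μ) = ∫ (_ : Ω), (T:ℝ)*(T:ℝ) ∂μ := by
        apply integral_congr_ae
        filter_upwards [hV1] with ω h
        rw [good_trace' h]
      rw [hc]
      simp [pow_two]
    have h6b : (∫ ω, (∑ x : Fin d, (V ω * (V ω)ᵀ) x x)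
        * (∑ y : Fin d, (V ω * (V ω)ᵀ) y y) ∂μ)
        = ∑ x : Fin d, ∑ y : Fin d,
            (∫ ω, (V ω * (V ω)ᵀ) x x * (V ω * (V ω)ᵀ) y y ∂μ) := by
      have hpt : (fun ω => (∑ x : Fin d, (V ω * (V ω)ᵀ) x x)
          * (∑ y : Fin d, (V ω * (V ω)ᵀ) y y))
          = fun ω => ∑ x : Fin d, ∑ y : Fin d,
              (V ω * (V ω)ᵀ) x x * (V ω * (V ω)ᵀ) y y :=
        funext fun ω => Finset.sum_mul_sum _ _ _ _
      rw [hpt, integral_finset_sum _ (fun x _ =>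
        integrable_finset_sum _ (fun y _ => intPm2' hVm hV1 x x y y))]
      exact Finset.sum_congr rfl fun x _ =>
        integral_finset_sum _ (fun y _ => intPm2' hVm hV1 x x y y)
    have h6c : ∀ x : Fin d, ∑ y : Fin d,
        (∫ ω, (V ω * (V ω)ᵀ) x x * (V ω * (V ω)ᵀ) y y ∂μ)
        = (∫ ω, (V ω * (V ω)ᵀ) i i * (V ω * (V ω)ᵀ) i i ∂μ)
          + ((d:ℝ)-1) * (∫ ω, (V ω * (V ω)ᵀ) i i * (V ω * (V ω)ᵀ) q0 q0 ∂μ) := by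
      intro x
      rw [← Finset.add_sum_erase _ _ (Finset.mem_univ x)]
      congr 1
      · exact F1 x
      calc ∑ y ∈ Finset.univ.erase x,
            (∫ ω, (V ω * (V ω)ᵀ) x x * (V ω * (V ω)ᵀ) y y ∂μ)
          = ∑ _y ∈ Finset.univ.erase x,
            (∫ ω, (V ω * (V ω)ᵀ) i i * (V ω * (V ω)ᵀ) q0 q0 ∂μ) :=
            Finset.sum_congr rfl fun y hy =>
              F3 x y (Ne.symm (Finset.ne_of_mem_erase hy))
        _ = ((d:ℝ)-1) * (∫ ω, (V ω * (V ω)ᵀ) i i * (V ω * (V ω)ᵀ) q0 q0 ∂μ) := by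
            rw [Finset.sum_const, Finset.card_erase_of_mem (Finset.mem_univ x),
              Finset.card_univ, Fintype.card_fin, nsmul_eq_mul,
              Nat.cast_sub (by omega : 1 ≤ d), Nat.cast_one]
    have h6d : ∑ x : Fin d, ∑ y : Fin d,
        (∫ ω, (V ω * (V ω)ᵀ) x x * (V ω * (V ω)ᵀ) y y ∂μ)
        = (d:ℝ) * ((∫ ω, (V ω * (V ω)ᵀ) i i * (V ω * (V ω)ᵀ) i i ∂μ)
          + ((d:ℝ)-1) * (∫ ω, (V ω * (V ω)ᵀ) i i * (V ω * (V ω)ᵀ) q0 q0 ∂μ)) := by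
      rw [Finset.sum_congr rfl fun x _ => h6c x, Finset.sum_const, Finset.card_univ,
        Fintype.card_fin, nsmul_eq_mul]
    have := (h6b.symm.trans h6a)
    rw [h6d] at this
    linear_combination this
  -- equation 2 : A = 2*B + G  (rotation invariance)
  have eq2 : (∫ ω, (V ω * (V ω)ᵀ) i i * (V ω * (V ω)ᵀ) i i ∂μ)
      = 2 * (∫ ω, (V ω * (V ω)ᵀ) i q0 * (V ω * (V ω)ᵀ) i q0 ∂μ)
        + (∫ ω, (V ω * (V ω)ᵀ) i i * (V ω * (V ω)ᵀ) q0 q0 ∂μ) := by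
    have hrot := M2_conj' hVm hV (rotMatS_orth hiq) i i i i
    have hptw : (fun ω => (rotMatS i q0 * (V ω * (V ω)ᵀ) * (rotMatS i q0)ᵀ) i i
        * (rotMatS i q0 * (V ω * (V ω)ᵀ) * (rotMatS i q0)ᵀ) i i)
        = fun ω =>
          (81/625:ℝ) * ((V ω * (V ω)ᵀ) i i * (V ω * (V ω)ᵀ) i i)
          + (576/625:ℝ) * ((V ω * (V ω)ᵀ) i q0 * (V ω * (V ω)ᵀ) i q0)
          + (256/625:ℝ) * ((V ω * (V ω)ᵀ) q0 q0 * (V ω * (V ω)ᵀ) q0 q0)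
          + (432/625:ℝ) * ((V ω * (V ω)ᵀ) i i * (V ω * (V ω)ᵀ) i q0)
          + (288/625:ℝ) * ((V ω * (V ω)ᵀ) i i * (V ω * (V ω)ᵀ) q0 q0)
          + (768/625:ℝ) * ((V ω * (V ω)ᵀ) i q0 * (V ω * (V ω)ᵀ) q0 q0) := by
      funext ω
      rw [rotMatS_pp i q0 hiq _ (Pm_symm' (V ω) q0 i)]
      ring
    rw [hptw] at hrot
    have I1 := (intPm2' hVm hV1 i i i i).const_mul (81/625:ℝ)
    have I2 := (intPm2' hVm hV1 i q0 i q0).const_mul (576/625:ℝ)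
    have I3 := (intPm2' hVm hV1 q0 q0 q0 q0).const_mul (256/625:ℝ)
    have I4 := (intPm2' hVm hV1 i i i q0).const_mul (432/625:ℝ)
    have I5 := (intPm2' hVm hV1 i i q0 q0).const_mul (288/625:ℝ)
    have I6 := (intPm2' hVm hV1 i q0 q0 q0).const_mul (768/625:ℝ)
    have J2 : Integrable (fun ω =>
        (81/625:ℝ) * ((V ω * (V ω)ᵀ) i i * (V ω * (V ω)ᵀ) i i)
        + (576/625:ℝ) * ((V ω * (V ω)ᵀ) i q0 * (V ω * (V ω)ᵀ) i q0)) μ := I1.add I2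
    have J3 : Integrable (fun ω =>
        (81/625:ℝ) * ((V ω * (V ω)ᵀ) i i * (V ω * (V ω)ᵀ) i i)
        + (576/625:ℝ) * ((V ω * (V ω)ᵀ) i q0 * (V ω * (V ω)ᵀ) i q0)
        + (256/625:ℝ) * ((V ω * (V ω)ᵀ) q0 q0 * (V ω * (V ω)ᵀ) q0 q0)) μ := J2.add I3
    have J4 : Integrable (fun ω =>
        (81/625:ℝ) * ((V ω * (V ω)ᵀ) i i * (V ω * (V ω)ᵀ) i i)
        + (576/625:ℝ) * ((V ω * (V ω)ᵀ) i q0 * (V ω * (V ω)ᵀ) i q0)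
        + (256/625:ℝ) * ((V ω * (V ω)ᵀ) q0 q0 * (V ω * (V ω)ᵀ) q0 q0)
        + (432/625:ℝ) * ((V ω * (V ω)ᵀ) i i * (V ω * (V ω)ᵀ) i q0)) μ := J3.add I4
    have J5 : Integrable (fun ω =>
        (81/625:ℝ) * ((V ω * (V ω)ᵀ) i i * (V ω * (V ω)ᵀ) i i)
        + (576/625:ℝ) * ((V ω * (V ω)ᵀ) i q0 * (V ω * (V ω)ᵀ) i q0)
        + (256/625:ℝ) * ((V ω * (V ω)ᵀ) q0 q0 * (V ω * (V ω)ᵀ) q0 q0)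
        + (432/625:ℝ) * ((V ω * (V ω)ᵀ) i i * (V ω * (V ω)ᵀ) i q0)
        + (288/625:ℝ) * ((V ω * (V ω)ᵀ) i i * (V ω * (V ω)ᵀ) q0 q0)) μ := J4.add I5
    rw [integral_add J5 I6, integral_add J4 I5, integral_add J3 I4, integral_add J2 I3,
      integral_add I1 I2,
      integral_const_mul, integral_const_mul, integral_const_mul, integral_const_mul,
      integral_const_mul, integral_const_mul] at hrot
    have z1 : (∫ ω, (V ω * (V ω)ᵀ) i i * (V ω * (V ω)ᵀ) i q0 ∂μ) = 0 := by
      apply sgnFlip_zero' hVm hV i i i q0 q0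
      rw [if_neg hiq, if_pos rfl]
      norm_num
    have z2 : (∫ ω, (V ω * (V ω)ᵀ) i q0 * (V ω * (V ω)ᵀ) q0 q0 ∂μ) = 0 := by
      apply sgnFlip_zero' hVm hV i q0 q0 q0 i
      rw [if_pos rfl, if_neg hq0]
      norm_num
    rw [z1, z2, F1 q0] at hrot
    linarith
  -- solve the linear system
  have hbval : ((d:ℝ)-1)*(d:ℝ)*((d:ℝ)+2)
      * (∫ ω, (V ω * (V ω)ᵀ) i q0 * (V ω * (V ω)ᵀ) i q0 ∂μ)
      = (T:ℝ)*((d:ℝ)-(T:ℝ)) := by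
    linear_combination (d:ℝ) * eq1 - eq3 - (d:ℝ)*((d:ℝ)-1) * eq2
  have haval : (d:ℝ)*((d:ℝ)+2)
      * (∫ ω, (V ω * (V ω)ᵀ) i i * (V ω * (V ω)ᵀ) i i ∂μ)
      = (T:ℝ)*((T:ℝ)+2) := by
    linear_combination ((d:ℝ)+2) * eq1 - hbval
  -- the general entrywise formula
  have key1 : ∀ j k : Fin d,
      (∫ ω, ((V ω * (V ω)ᵀ) * Matrix.single i i (1 : ℝ) * (V ω * (V ω)ᵀ)) j k ∂μ) =
        (((T : ℝ) ^ 2 * d + T * ((d : ℝ) - 2)) / (((d : ℝ) - 1) * d * ((d : ℝ) + 2)))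
            * Matrix.single i i (1 : ℝ) j k
          + (((T : ℝ) * ((d : ℝ) - T)) / (((d : ℝ) - 1) * d * ((d : ℝ) + 2)))
            * (if j = k then 1 else 0) := by
    intro j k
    simp only [PEP']
    by_cases hjk : j = k
    · subst hjk
      by_cases hji : j = i
      · subst hji
        rw [Matrix.single_apply_same, if_pos rfl]
        field_simp
        simp only [sq]
        linear_combination ((d:ℝ)-1) * haval
      · have hsym : (fun ω => (V ω * (V ω)ᵀ) j i * (V ω * (V ω)ᵀ) i j)
            = fun ω => (V ω * (V ω)ᵀ) i j * (V ω * (V ω)ᵀ) i j := by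
          funext ω
          rw [Pm_symm' (V ω) j i]
        rw [hsym, F2 i j (Ne.symm hji),
          Matrix.single_apply_of_ne _ _ _ _ _ (by rintro ⟨h1, _⟩; exact hji h1.symm),
          if_pos rfl]
        field_simp
        simp only [sq]
        linear_combination hbval
    · have hz : (∫ ω, (V ω * (V ω)ᵀ) j i * (V ω * (V ω)ᵀ) i k ∂μ) = 0 := by
        by_cases hji : j = i
        · subst hji
          apply sgnFlip_zero' hVm hV j j j k k
          rw [if_neg hjk, if_pos rfl]
          norm_num
        · apply sgnFlip_zero' hVm hV j i i k j
          rw [if_pos rfl, if_neg (show ¬(i = j) from fun h => hji h.symm),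
            if_neg (show ¬(k = j) from fun h => hjk h.symm)]
          norm_num
      rw [hz,
        Matrix.single_apply_of_ne _ _ _ _ _ (by rintro ⟨h1, h2⟩; exact hjk (h1.symm.trans h2)),
        if_neg hjk]
      ring
  refine ⟨key1, ?_, ?_, ?_⟩
  · rw [key1 i i, Matrix.single_apply_same, if_pos rfl]
    field_simp
    ring
  · intro j hji
    rw [key1 j j,
      Matrix.single_apply_of_ne _ _ _ _ _ (by rintro ⟨h1, _⟩; exact hji h1.symm),
      if_pos rfl]
    ring
  · intro j k hjk
    rw [key1 j k,
      Matrix.single_apply_of_ne _ _ _ _ _ (by rintro ⟨h1, h2⟩; exact hjk (h1.symm.trans h2)),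
      if_neg hjk]
    ring
end
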